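/- arXiv:1911.03316 — 11 statements merged into one kernel-verified Lean document; each statement's English description precedes it below -/
import Mathlib

section
/- For all integers m ≥ 1, j with 0 ≤ j ≤ m, and all k ∈ ℤ, one has φ(m,j,−(j+k)) = φ(m,j,k). -/
/-- The δ-coefficient function `φ(m,j,k)` for type `A₁⁽¹⁾`: writing `k = m*q + r` by
Euclidean division (`0 ≤ r < m` when `1 ≤ m`), set `φ(m,j,k) = -q*(k+r+j) - r` if
`0 ≤ r ≤ m - j`, and `φ(m,j,k) = -q*(k+r+j) + m - j - 2*r` if `m - j ≤ r < m`
(the two expressions agree at `r = m - j`). -/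
def phi (m j k : ℤ) : ℤ :=
  -(k.ediv m) * (k + k.emod m + j) +
    (if k.emod m ≤ m - j then -(k.emod m) else m - j - 2 * (k.emod m))

/-- For all integers `m ≥ 1`, `0 ≤ j ≤ m` and all `k : ℤ`,
one has `φ(m,j,−(j+k)) = φ(m,j,k)`. -/
theorem phi_reflection (m j k : ℤ) (hm : 1 ≤ m) (hj0 : 0 ≤ j) (hjm : j ≤ m) :
    phi m j (-(j + k)) = phi m j k := by
  have hm0 : (0:ℤ) < m := by omega
  set q : ℤ := k.ediv m with hq
  set r : ℤ := k.emod m with hr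
  have hr0 : 0 ≤ r := Int.emod_nonneg k (by omega)
  have hrm : r < m := Int.emod_lt_of_pos k hm0
  have hk : m * q + r = k := by rw [hq, hr]; exact Int.mul_ediv_add_emod k m
  clear_value q r
  unfold phi
  rw [← hq, ← hr]
  by_cases h1 : r ≤ m - j
  · rw [if_pos h1]
    by_cases h2 : j + r = 0
    · -- j = 0, r = 0
      have hj : j = 0 := by omega
      have hr' : r = 0 := by omega
      have hkey : (-(j + k)) / m = -q ∧ (-(j + k)) % m = 0 := by
        rw [Int.ediv_emod_unique hm0]
        refine ⟨by linarith, le_refl 0, hm0⟩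
      rw [show (-(j+k)).ediv m = (-(j+k)) / m from rfl,
        show (-(j+k)).emod m = (-(j+k)) % m from rfl, hkey.1, hkey.2,
        if_pos (by omega : (0:ℤ) ≤ m - j)]
      subst hj hr'
      have : k = m * q := by linarith
      subst this
      ring
    · -- 0 < j + r ≤ m
      have hkey : (-(j + k)) / m = -q - 1 ∧ (-(j + k)) % m = m - j - r := by
        rw [Int.ediv_emod_unique hm0]
        refine ⟨by linarith [hk], by omega, by omega⟩
      rw [show (-(j+k)).ediv m = (-(j+k)) / m from rfl,
        show (-(j+k)).emod m = (-(j+k)) % m from rfl, hkey.1, hkey.2,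
        if_pos (by omega : m - j - r ≤ m - j)]
      have : k = m * q + r := by linarith
      subst this
      ring
  · rw [if_neg h1]
    -- m < j + r < 2m
    have hkey : (-(j + k)) / m = -q - 2 ∧ (-(j + k)) % m = 2 * m - j - r := by
      rw [Int.ediv_emod_unique hm0]
      refine ⟨by linarith [hk], by omega, by omega⟩
    rw [show (-(j+k)).ediv m = (-(j+k)) / m from rfl,
      show (-(j+k)).emod m = (-(j+k)) % m from rfl, hkey.1, hkey.2,
      if_neg (by omega : ¬ 2 * m - j - r ≤ m - j)]
    have : k = m * q + r := by linarith
    subst this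
    ring
end

section
/- Let m ≥ 1 and 0 ≤ j ≤ m be integers and k ∈ ℤ. Then (a) for every odd integer p satisfying |k + j/2 − mp/2| ≤ (m−j)/2 one has φ(m,j,k) + k(k+j)/m = ((k + j/2 − mp/2)² − (m−j)²/4)/m, and (b) for every even integer p satisfying |k + j/2 − mp/2| ≤ j/2 one has φ(m,j,k) + k(k+j)/m = ((k + j/2 − mp/2)² − j²/4)/m (all identities in ℚ). -/
/-- Euclidean division determined by the bounds `m*t ≤ k < m*t + m`. -/
lemma phi_divmod_helper (m t k : ℤ) (hm : 0 < m) (h1 : m * t ≤ k) (h2 : k < m * t + m) :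
    k.ediv m = t ∧ k.emod m = k - m * t := by
  have := (Int.ediv_emod_unique (a := k) (b := m) (r := k - m * t) (q := t) hm).mpr
    ⟨by ring, by linarith, by linarith⟩
  exact this

/-- Piecewise-quadratic description of `φ(m,j,k) + k(k+j)/m` in `ℚ`:
(a) for every odd `p` with `|k + j/2 − mp/2| ≤ (m−j)/2`, it equals
`((k + j/2 − mp/2)² − (m−j)²/4)/m`; (b) for every even `p` with
`|k + j/2 − mp/2| ≤ j/2`, it equals `((k + j/2 − mp/2)² − j²/4)/m`. -/
theorem phi_quadratic (m j k : ℤ) (hm : 1 ≤ m) (hj0 : 0 ≤ j) (hjm : j ≤ m) :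
    (∀ p : ℤ, Odd p →
      |(k : ℚ) + (j : ℚ) / 2 - (m : ℚ) * (p : ℚ) / 2| ≤ ((m : ℚ) - (j : ℚ)) / 2 →
      (phi m j k : ℚ) + (k : ℚ) * ((k : ℚ) + (j : ℚ)) / (m : ℚ) =
        (((k : ℚ) + (j : ℚ) / 2 - (m : ℚ) * (p : ℚ) / 2) ^ 2
          - ((m : ℚ) - (j : ℚ)) ^ 2 / 4) / (m : ℚ)) ∧
    (∀ p : ℤ, Even p →
      |(k : ℚ) + (j : ℚ) / 2 - (m : ℚ) * (p : ℚ) / 2| ≤ (j : ℚ) / 2 →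
      (phi m j k : ℚ) + (k : ℚ) * ((k : ℚ) + (j : ℚ)) / (m : ℚ) =
        (((k : ℚ) + (j : ℚ) / 2 - (m : ℚ) * (p : ℚ) / 2) ^ 2
          - (j : ℚ) ^ 2 / 4) / (m : ℚ)) := by
  have hm0 : (0 : ℤ) < m := hm
  have hmQ : (m : ℚ) ≠ 0 := by exact_mod_cast hm0.ne'
  constructor
  · rintro p ⟨t, rfl⟩ hle
    push_cast at hle
    rw [abs_le] at hle
    obtain ⟨ha, hb⟩ := hle
    have h1 : (m : ℚ) * t ≤ k := by linarith
    have h2 : (k : ℚ) ≤ m * t + m - j := by linarith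
    have h1' : m * t ≤ k := by exact_mod_cast h1
    have h2' : k ≤ m * t + m - j := by exact_mod_cast h2
    rcases eq_or_lt_of_le (show k ≤ m * t + m by linarith) with hk | hk
    · -- edge case: k = m*(t+1), forces j = 0
      have hj : j = 0 := by linarith
      obtain ⟨hd, hmo⟩ := phi_divmod_helper m (t + 1) k hm0 (by linarith) (by linarith)
      subst hj
      simp only [phi, hd, hmo]
      rw [if_pos (by linarith)]
      subst hk
      push_cast
      field_simp
      ring
    · obtain ⟨hd, hmo⟩ := phi_divmod_helper m t k hm0 h1' hk
      simp only [phi, hd, hmo]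
      rw [if_pos (by linarith)]
      push_cast
      field_simp
      ring
  · rintro p ⟨t, rfl⟩ hle
    push_cast at hle
    rw [abs_le] at hle
    obtain ⟨ha, hb⟩ := hle
    have h1 : (m : ℚ) * t - j ≤ k := by linarith
    have h2 : (k : ℚ) ≤ m * t := by linarith
    have h1' : m * t - j ≤ k := by exact_mod_cast h1
    have h2' : k ≤ m * t := by exact_mod_cast h2
    rcases eq_or_lt_of_le h2' with hk | hk
    · -- k = m*t, so r = 0
      obtain ⟨hd, hmo⟩ := phi_divmod_helper m t k hm0 (by linarith) (by linarith)
      simp only [phi, hd, hmo]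
      rw [if_pos (by linarith)]
      subst hk
      push_cast
      field_simp
      ring
    · -- k < m*t, so q = t - 1
      obtain ⟨hd, hmo⟩ := phi_divmod_helper m (t - 1) k hm0 (by linarith) (by linarith)
      simp only [phi, hd, hmo]
      split_ifs with hbr
      · -- boundary: r = m - j, i.e. k = m*t - j
        have hk' : k = m * t - j := by linarith
        subst hk'
        push_cast
        field_simp
        ring
      · push_cast
        field_simp
        ring
end

section
/- Let m ≥ 1, u ≥ 1, j, j' be integers with 0 ≤ j ≤ m, 0 ≤ j' ≤ um, and j' ≡ j (mod 2). For n ∈ ℤ define N(n) = −φ(m,j,(j'−j)/2 − n(um+2)) + u·n·(j' + 1 − n(um+2)). Then N, viewed as a function of n ∈ ℤ, attains its minimum at n = 0; i.e., N(n) ≥ N(0) for every n ∈ ℤ. -/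
lemma quad_key (m x d c : ℤ) (hm : 1 ≤ m) (hc : 0 ≤ c) (hcm : c ≤ m)
    (hx1 : -m - c ≤ x) (hx2 : x ≤ m + c) : 0 ≤ m*d^2 + d*x + c := by
  rcases lt_trichotomy d 0 with hd | hd | hd
  · have hd1 : d ≤ -1 := by omega
    have h1 : 0 ≤ (-d - 1) * (m * (-d) - c) := by
      apply mul_nonneg (by omega)
      nlinarith [mul_le_mul_of_nonneg_left (show (1:ℤ) ≤ -d by omega) (show (0:ℤ) ≤ m by omega)]
    have h2 : 0 ≤ (-d) * (m - x + c) := mul_nonneg (by omega) (by linarith)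
    nlinarith
  · simp [hd]; linarith
  · have hd1 : 1 ≤ d := by omega
    have h1 : 0 ≤ (d - 1) * (m * d - c) := by
      apply mul_nonneg (by omega)
      nlinarith [mul_le_mul_of_nonneg_left hd1 (show (0:ℤ) ≤ m by omega)]
    have h2 : 0 ≤ d * (m + x + c) := mul_nonneg (by omega) (by linarith)
    nlinarith

/-- Line bound A: slope `2t+1`. -/
lemma phi_lower_A (m j k t : ℤ) (hm : 1 ≤ m) (hj0 : 0 ≤ j) (hjm : j ≤ m) :
    (2*t+1)*k + t*j - m*(t*(t+1)) ≤ -phi m j k := by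
  have hme : m * (k.ediv m) + k.emod m = k := Int.mul_ediv_add_emod k m
  have hr0 : 0 ≤ k.emod m := Int.emod_nonneg k (by omega)
  have hrm : k.emod m < m := Int.emod_lt_of_pos k (by omega)
  unfold phi
  set q := k.ediv m with hq
  set r := k.emod m with hr
  rw [← hme]
  split_ifs with h
  · have key := quad_key m (2*r+j-m) (q-t) 0 hm le_rfl (by omega) (by omega) (by omega)
    nlinarith [key]
  · have key := quad_key m (2*r+j-m) (q-t) (r+j-m) hm (by omega) (by omega) (by omega) (by omega)
    nlinarith [key]

/-- Line bound B: slope `2t+2`. -/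
lemma phi_lower_B (m j k t : ℤ) (hm : 1 ≤ m) (hj0 : 0 ≤ j) (hjm : j ≤ m) :
    (2*t+2)*k + t*j + j - m*(t*t) - 2*m*t - m ≤ -phi m j k := by
  have hme : m * (k.ediv m) + k.emod m = k := Int.mul_ediv_add_emod k m
  have hr0 : 0 ≤ k.emod m := Int.emod_nonneg k (by omega)
  have hrm : k.emod m < m := Int.emod_lt_of_pos k (by omega)
  unfold phi
  set q := k.ediv m with hq
  set r := k.emod m with hr
  rw [← hme]
  split_ifs with h
  · have key := quad_key m (2*r+j-2*m) (q-t) (m-r-j) hm (by omega) (by omega) (by omega) (by omega)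
    nlinarith [key]
  · have key := quad_key m (2*r+j-2*m) (q-t) 0 hm le_rfl (by omega) (by omega) (by omega)
    nlinarith [key]

/-- For `m, u ≥ 1`, `0 ≤ j ≤ m`, `0 ≤ j' ≤ um`, `j' ≡ j (mod 2)`, the function
`N(n) = −φ(m,j,(j'−j)/2 − n(um+2)) + u·n·(j' + 1 − n(um+2))` attains its minimum
over `n ∈ ℤ` at `n = 0`. -/
theorem N_min_at_zero (m u j j' : ℤ) (hm : 1 ≤ m) (hu : 1 ≤ u)
    (hj0 : 0 ≤ j) (hjm : j ≤ m) (hj'0 : 0 ≤ j') (hj'um : j' ≤ u * m)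
    (hpar : 2 ∣ j' - j) :
    ∀ n : ℤ,
      -phi m j ((j' - j) / 2) ≤
        -phi m j ((j' - j) / 2 - n * (u * m + 2)) + u * n * (j' + 1 - n * (u * m + 2)) := by
  intro n
  set K := (j' - j) / 2 with hK
  have h2K : 2 * K = j' - j := by
    rw [hK]; exact Int.mul_ediv_cancel' hpar
  have hme0 : m * (K.ediv m) + K.emod m = K := Int.mul_ediv_add_emod K m
  have hr00 : 0 ≤ K.emod m := Int.emod_nonneg K (by omega)
  have hr0m : K.emod m < m := Int.emod_lt_of_pos K (by omega)
  set a := K.ediv m with ha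
  set r0 := K.emod m with hr0
  have hj' : j' = 2 * (m * a + r0) + j := by omega
  by_cases hbr : r0 ≤ m - j
  · -- low branch: use line A at t = a - n*u
    have hval : -phi m j K = a * (K + r0 + j) + r0 := by
      unfold phi; rw [← ha, ← hr0, if_pos hbr]; ring
    -- bounds on a
    have ha0 : 0 ≤ a := by
      by_contra hcon
      have h1 : m * a ≤ m * (-1) :=
        mul_le_mul_of_nonneg_left (by omega) (by omega)
      omega
    have hau : 2 * a ≤ u := by
      by_contra hcon
      have h1 : m * (u + 1) ≤ m * (2 * a) :=
        mul_le_mul_of_nonneg_left (by omega) (by omega)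
      nlinarith
    have hred : 0 ≤ 2*u*n^2 + n*(u-2) - 4*a*n := by
      have h4a : 4 * a ≤ 3 * u - 2 := by omega
      rcases lt_trichotomy n 0 with hn | hn | hn
      · have h1 : 0 ≤ (-n) * (-(2*u*n + u - 2 - 4*a)) := by
          apply mul_nonneg (by omega)
          nlinarith [mul_le_mul_of_nonneg_left (show n ≤ -1 by omega) (show (0:ℤ) ≤ 2*u by omega)]
        nlinarith
      · simp [hn]
      · have h1 : 0 ≤ n * (2*u*n + u - 2 - 4*a) := by
          apply mul_nonneg (by omega)
          nlinarith [mul_le_mul_of_nonneg_left (show 1 ≤ n by omega) (show (0:ℤ) ≤ 2*u by omega)]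
        nlinarith
    have hA := phi_lower_A m j (K - n * (u * m + 2)) (a - n * u) hm hj0 hjm
    rw [hval, hj']
    rw [show K = m * a + r0 from hme0.symm] at hA ⊢
    linarith [hA, hred]
  · -- high branch: use line B at t = a - n*u
    have hbr' : m + 1 ≤ r0 + j := by omega
    have hval : -phi m j K = a * (K + r0 + j) + (2*r0 + j - m) := by
      unfold phi; rw [← ha, ← hr0, if_neg hbr]; ring
    have ha0 : -1 ≤ a := by
      by_contra hcon
      have h1 : m * a ≤ m * (-2) :=
        mul_le_mul_of_nonneg_left (by omega) (by omega)
      omega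
    have hau : 2 * a + 2 ≤ u := by
      by_contra hcon
      have h1 : m * u ≤ m * (2 * a + 1) :=
        mul_le_mul_of_nonneg_left (by omega) (by omega)
      nlinarith
    have hred : 0 ≤ 2*u*n^2 + n*(u-4) - 4*a*n := by
      rcases lt_trichotomy n 0 with hn | hn | hn
      · have h1 : 0 ≤ (-n) * (-(2*u*n + u - 4 - 4*a)) := by
          apply mul_nonneg (by omega)
          nlinarith [mul_le_mul_of_nonneg_left (show n ≤ -1 by omega) (show (0:ℤ) ≤ 2*u by omega)]
        nlinarith
      · simp [hn]
      · have h1 : 0 ≤ n * (2*u*n + u - 4 - 4*a) := by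
          apply mul_nonneg (by omega)
          nlinarith [mul_le_mul_of_nonneg_left (show 1 ≤ n by omega) (show (0:ℤ) ≤ 2*u by omega)]
        nlinarith
    have hB := phi_lower_B m j (K - n * (u * m + 2)) (a - n * u) hm hj0 hjm
    rw [hval, hj']
    rw [show K = m * a + r0 from hme0.symm] at hB ⊢
    linarith [hB, hred]
end

section
/- Let m ≥ 1, u ≥ 1, j, j' be integers with 0 ≤ j ≤ m, 0 ≤ j' ≤ um, and j' ≡ j (mod 2). For n ∈ ℤ define N(n) = −φ(m,j,−(j'+j)/2 − 1 + n(um+2)) + u·n·(j' + 1 − n(um+2)). Then N, viewed as a function of n ∈ ℤ, attains its minimum at n = 0 or n = 1; i.e., N(n) ≥ min(N(0), N(1)) for every n ∈ ℤ. -/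
/-- Auxiliary "fractional part" correction term. -/
def Gc (m j r : ℤ) : ℤ := if r ≤ m - j then r * (m - j - r) else (m - r) * (r - (m - j))

lemma phi_eq (m j k : ℤ) : m * phi m j k = -(k ^ 2) - j * k - Gc m j (k % m) := by
  have h : m * (k / m) + k % m = k := Int.mul_ediv_add_emod k m
  unfold phi Gc
  rw [show k.emod m = k % m from rfl, show k.ediv m = k / m from rfl]
  by_cases h1 : k % m ≤ m - j
  · rw [if_pos h1, if_pos h1]
    linear_combination (-(k + k % m + j)) * h
  · rw [if_neg h1, if_neg h1]
    linear_combination (-(k + k % m + j)) * h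

lemma mod_shift (m k : ℤ) : (k + 2) % m = (k % m + 2) % m := by
  conv_lhs => rw [← Int.mul_ediv_add_emod k m,
    show m * (k / m) + k % m + 2 = k % m + 2 + (k / m) * m by ring, Int.add_mul_emod_self_right]

lemma Gc_diff (m j k : ℤ) (hm : 1 ≤ m) (hj0 : 0 ≤ j) (hjm : j ≤ m) :
    -(3 * m) ≤ Gc m j ((k + 2) % m) - Gc m j (k % m) ∧
      Gc m j ((k + 2) % m) - Gc m j (k % m) ≤ 3 * m := by
  have hr0 : 0 ≤ k % m := Int.emod_nonneg k (by omega)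
  have hrm : k % m < m := Int.emod_lt_of_pos k (by omega)
  have h2 : (k + 2) % m = (k % m + 2) % m := mod_shift m k
  rcases lt_or_ge (k % m + 2) m with hlt | hge
  · have h3 : (k % m + 2) % m = k % m + 2 := Int.emod_eq_of_lt (by omega) hlt
    rw [h2, h3]
    unfold Gc
    split_ifs with h4 h5 h5 <;> constructor <;> nlinarith
  · rcases eq_or_lt_of_le hm with hm1 | hm2
    · have hr : k % m = 0 := by omega
      have h3 : (k % m + 2) % m = 0 := by rw [hr, ← hm1]; norm_num
      rw [h2, h3, hr]
      unfold Gc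
      split_ifs <;> constructor <;> nlinarith
    · have h3 : (k % m + 2) % m = k % m + 2 - m := by
        have h4 : (k % m + 2 - m) % m = k % m + 2 - m :=
          Int.emod_eq_of_lt (by omega) (by omega)
        conv_lhs => rw [show k % m + 2 = k % m + 2 - m + 1 * m by ring]
        rw [Int.add_mul_emod_self_right]
        exact h4
      rw [h2, h3]
      unfold Gc
      split_ifs with h4 h5 h5 <;> constructor <;> nlinarith

/-- The function `N(n)`. -/
def Nf (m u j j' n : ℤ) : ℤ :=
  -phi m j (-((j' + j) / 2) - 1 + n * (u * m + 2)) + u * n * (j' + 1 - n * (u * m + 2))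

lemma Nf_delta (m u j j' n : ℤ) (hpar : 2 ∣ j' - j) :
    m * Nf m u j j' (n + 1) - m * Nf m u j j' n =
      2 * (2 * n + 1) * (u * m + 2) - u * m - 2 * j' - 4 +
        (Gc m j ((-((j' + j) / 2) - 1 + n * (u * m + 2) + 2) % m) -
          Gc m j ((-((j' + j) / 2) - 1 + n * (u * m + 2)) % m)) := by
  have hd : (2 : ℤ) ∣ j' + j := by
    obtain ⟨c, hc⟩ := hpar
    exact ⟨c + j, by omega⟩
  have h2 : 2 * ((j' + j) / 2) = j' + j := Int.mul_ediv_cancel' hd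
  have e1 := phi_eq m j (-((j' + j) / 2) - 1 + n * (u * m + 2))
  have e2 := phi_eq m j (-((j' + j) / 2) - 1 + n * (u * m + 2) + 2 + u * m)
  have hmod : (-((j' + j) / 2) - 1 + n * (u * m + 2) + 2 + u * m) % m =
      (-((j' + j) / 2) - 1 + n * (u * m + 2) + 2) % m := Int.add_mul_emod_self_right _ _ _
  rw [hmod] at e2
  unfold Nf
  rw [show -((j' + j) / 2) - 1 + (n + 1) * (u * m + 2) =
      -((j' + j) / 2) - 1 + n * (u * m + 2) + 2 + u * m by ring]
  linear_combination e1 - e2 - (u * m + 2) * h2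

lemma Nf_up (m u j j' n : ℤ) (hm : 1 ≤ m) (hu : 1 ≤ u)
    (hj0 : 0 ≤ j) (hjm : j ≤ m) (hj'um : j' ≤ u * m) (hpar : 2 ∣ j' - j) (hn : 1 ≤ n) :
    Nf m u j j' n ≤ Nf m u j j' (n + 1) := by
  have key := Nf_delta m u j j' n hpar
  have hG := (Gc_diff m j (-((j' + j) / 2) - 1 + n * (u * m + 2)) hm hj0 hjm).1
  have hpos : 0 < m := by omega
  have h1 : 0 ≤ (n - 1) * (u * m + 2) :=
    mul_nonneg (by omega) (by nlinarith)
  have h2 : 0 ≤ (u - 1) * m := mul_nonneg (by omega) (by omega)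
  have : m * Nf m u j j' n ≤ m * Nf m u j j' (n + 1) := by nlinarith [key, hG, h1, h2]
  exact le_of_mul_le_mul_left this hpos

lemma Nf_down (m u j j' n : ℤ) (hm : 1 ≤ m) (hu : 1 ≤ u)
    (hj0 : 0 ≤ j) (hjm : j ≤ m) (hj'0 : 0 ≤ j') (hpar : 2 ∣ j' - j) (hn : n ≤ -1) :
    Nf m u j j' (n + 1) ≤ Nf m u j j' n := by
  have key := Nf_delta m u j j' n hpar
  have hG := (Gc_diff m j (-((j' + j) / 2) - 1 + n * (u * m + 2)) hm hj0 hjm).2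
  have hpos : 0 < m := by omega
  have h1 : 0 ≤ (-n - 1) * (u * m + 2) :=
    mul_nonneg (by omega) (by nlinarith)
  have h2 : 0 ≤ (u - 1) * m := mul_nonneg (by omega) (by omega)
  have : m * Nf m u j j' (n + 1) ≤ m * Nf m u j j' n := by nlinarith [key, hG, h1, h2]
  exact le_of_mul_le_mul_left this hpos

/-- For `m, u ≥ 1`, `0 ≤ j ≤ m`, `0 ≤ j' ≤ um`, `j' ≡ j (mod 2)`, the function
`N(n) = −φ(m,j,−(j'+j)/2 − 1 + n(um+2)) + u·n·(j' + 1 − n(um+2))` attains its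
minimum over `n ∈ ℤ` at `n = 0` or `n = 1`. -/
theorem N_min_at_zero_or_one (m u j j' : ℤ) (hm : 1 ≤ m) (hu : 1 ≤ u)
    (hj0 : 0 ≤ j) (hjm : j ≤ m) (hj'0 : 0 ≤ j') (hj'um : j' ≤ u * m)
    (hpar : 2 ∣ j' - j) :
    ∀ n : ℤ,
      min (-phi m j (-((j' + j) / 2) - 1))
          (-phi m j (-((j' + j) / 2) - 1 + (u * m + 2)) + u * (j' + 1 - (u * m + 2))) ≤
        -phi m j (-((j' + j) / 2) - 1 + n * (u * m + 2))
          + u * n * (j' + 1 - n * (u * m + 2)) := by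
  intro n
  have h0 : Nf m u j j' 0 = -phi m j (-((j' + j) / 2) - 1) := by
    unfold Nf; norm_num
  have h1 : Nf m u j j' 1 =
      -phi m j (-((j' + j) / 2) - 1 + (u * m + 2)) + u * (j' + 1 - (u * m + 2)) := by
    unfold Nf; norm_num
  have goal : min (Nf m u j j' 0) (Nf m u j j' 1) ≤ Nf m u j j' n := by
    rcases le_or_gt 1 n with hn | hn
    · have : Nf m u j j' 1 ≤ Nf m u j j' n :=
        Int.le_induction (motive := fun t _ => Nf m u j j' 1 ≤ Nf m u j j' t) (le_refl _)
          (fun t ht ih => le_trans ih (Nf_up m u j j' t hm hu hj0 hjm hj'um hpar ht)) n hn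
      exact le_trans (min_le_right _ _) this
    · have hn0 : n ≤ 0 := by omega
      have : Nf m u j j' 0 ≤ Nf m u j j' n :=
        Int.le_induction_down (motive := fun t _ => Nf m u j j' 0 ≤ Nf m u j j' t) (le_refl _)
          (fun n hn ih => le_trans ih (by
            have := Nf_down m u j j' (n - 1) hm hu hj0 hjm hj'0 hpar (by omega)
            simpa using this)) n hn0
      exact le_trans (min_le_left _ _) this
  rw [h0, h1] at goal
  exact goal
end

section
/- Let m ≥ 1, u ≥ 1, j, j' be integers with 0 ≤ j ≤ m, 0 ≤ j' ≤ um, and j' ≡ j (mod 2). Then −φ(m,j,−(j'+j)/2 − 1 + (um+2)) + u(j' + 1 − (um+2)) = u − φ(m,j,−(j'+j)/2 + 1). -/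
/-- Closed form of the exponent `N(1)`: for `m, u ≥ 1`, `0 ≤ j ≤ m`, `0 ≤ j' ≤ um`,
`j' ≡ j (mod 2)`, one has
`−φ(m,j,−(j'+j)/2 − 1 + (um+2)) + u(j' + 1 − (um+2)) = u − φ(m,j,−(j'+j)/2 + 1)`. -/
theorem N_one_closed_form (m u j j' : ℤ) (hm : 1 ≤ m) (hu : 1 ≤ u)
    (hj0 : 0 ≤ j) (hjm : j ≤ m) (hj'0 : 0 ≤ j') (hj'um : j' ≤ u * m)
    (hpar : 2 ∣ j' - j) :
    -phi m j (-((j' + j) / 2) - 1 + (u * m + 2)) + u * (j' + 1 - (u * m + 2)) =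
      u - phi m j (-((j' + j) / 2) + 1) := by

  have harg : -((j' + j) / 2) - 1 + (u * m + 2) = (-((j' + j) / 2) + 1) + u * m := by ring
  set k : ℤ := -((j' + j) / 2) + 1 with hkdef
  have hmne : m ≠ 0 := by omega
  have hmod : (k + u * m).emod m = k.emod m := Int.add_mul_emod_self_right (a := k) (b := u) (c := m)
  have hdiv : (k + u * m).ediv m = k.ediv m + u := Int.add_mul_ediv_right k u hmne
  have hk : m * (k.ediv m) + k.emod m = k := Int.mul_ediv_add_emod k m
  have hs : 2 * ((j' + j) / 2) = j' + j := by omega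
  rw [harg]
  unfold phi
  rw [hmod, hdiv]
  split_ifs with h
  · linear_combination u * hk - u * hs
  · linear_combination u * hk - u * hs
end

section
/- Let m ≥ 1, u ≥ 1, j, j' be integers with 0 ≤ j ≤ m, 0 ≤ j' ≤ um, and j' ≡ j (mod 2). Then −φ(m,j,(j'−j)/2) ≤ min( −φ(m,j,−(j'+j)/2 − 1), u − φ(m,j,−(j'+j)/2 + 1) ). -/
lemma phi_eval (m j q r : ℤ) (hm : 1 ≤ m) (h0 : 0 ≤ r) (h1 : r < m) :
    phi m j (m * q + r) =
      -q * (m * q + r + r + j) + (if r ≤ m - j then -r else m - j - 2 * r) := by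
  have hne : m ≠ 0 := by omega
  have hd : (m * q + r).ediv m = q := by
    show (m * q + r) / m = q
    rw [show m * q + r = r + m * q by ring, Int.add_mul_ediv_left r q hne,
      Int.ediv_eq_zero_of_lt h0 h1]; ring
  have he : (m * q + r).emod m = r := by
    show (m * q + r) % m = r
    rw [show m * q + r = r + q * m by ring, Int.add_mul_emod_self_right,
      Int.emod_eq_of_lt h0 h1]
  simp only [phi, hd, he]

lemma phi_symm (m j k : ℤ) (hm : 1 ≤ m) (hj0 : 0 ≤ j) (hjm : j ≤ m) :
    phi m j (-k - j) = phi m j k := by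
  have hk : m * (k.ediv m) + k.emod m = k := Int.mul_ediv_add_emod k m
  set q := k.ediv m with hq
  set r := k.emod m with hr
  have hr0 : 0 ≤ r := Int.emod_nonneg k (by omega)
  have hrm : r < m := Int.emod_lt_of_pos k (by omega)
  rw [← hk]
  rw [phi_eval m j q r hm hr0 hrm]
  rcases le_or_gt (r + j) m with hc | hc
  · rcases eq_or_lt_of_le (show 0 ≤ r + j by omega) with hz | hz
    · have hr' : r = 0 := by omega
      have hj' : j = 0 := by omega
      have e : -(m * q + r) - j = m * (-q) + 0 := by rw [hr', hj']; ring
      rw [e, phi_eval m j (-q) 0 hm le_rfl (by omega)]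
      rw [if_pos (by omega), if_pos (by omega), hr', hj']; ring
    · have e : -(m * q + r) - j = m * (-q - 1) + (m - r - j) := by ring
      rw [e, phi_eval m j (-q - 1) (m - r - j) hm (by omega) (by omega)]
      rw [if_pos (by omega), if_pos (by omega)]; ring
  · have e : -(m * q + r) - j = m * (-q - 2) + (2 * m - r - j) := by ring
    rw [e, phi_eval m j (-q - 2) (2 * m - r - j) hm (by omega) (by omega)]
    rw [if_neg (by omega), if_neg (by omega)]; ring

lemma phi_succ_le (m j k : ℤ) (hm : 1 ≤ m) (hj0 : 0 ≤ j) (hjm : j ≤ m)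
    (h : 0 ≤ 2 * k + j) : phi m j (k + 1) ≤ phi m j k := by
  have hk : m * (k.ediv m) + k.emod m = k := Int.mul_ediv_add_emod k m
  set q := k.ediv m with hq
  set r := k.emod m with hr
  have hr0 : 0 ≤ r := Int.emod_nonneg k (by omega)
  have hrm : r < m := Int.emod_lt_of_pos k (by omega)
  rw [← hk] at h ⊢
  rw [phi_eval m j q r hm hr0 hrm]
  rcases le_or_gt r (m - j) with hA | hA
  · rw [if_pos hA]
    rcases lt_or_ge (r + 1) m with hc | hc
    · have e : m * q + r + 1 = m * q + (r + 1) := by ring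
      rw [e, phi_eval m j q (r + 1) hm (by omega) (by omega)]
      rcases le_or_gt (r + 1) (m - j) with h1 | h1
      · rw [if_pos h1]
        have hq0 : 0 ≤ q := by
          by_contra hneg
          push_neg at hneg
          have : m * q ≤ m * (-1) := mul_le_mul_of_nonneg_left (by omega) (by omega)
          omega
        nlinarith
      · rw [if_neg (by omega)]
        have hq0 : -1 ≤ q := by
          by_contra hneg
          push_neg at hneg
          have : m * q ≤ m * (-2) := mul_le_mul_of_nonneg_left (by omega) (by omega)
          omega
        have hre : r = m - j := by omega
        nlinarith
    · have hrm1 : r = m - 1 := by omega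
      have e : m * q + r + 1 = m * (q + 1) + 0 := by rw [hrm1]; ring
      rw [e, phi_eval m j (q + 1) 0 hm le_rfl (by omega), if_pos (by omega)]
      have hq0 : 0 ≤ q := by
        by_contra hneg
        push_neg at hneg
        have : m * q ≤ m * (-1) := mul_le_mul_of_nonneg_left (by omega) (by omega)
        omega
      nlinarith
  · rw [if_neg (by omega)]
    have hq0 : -1 ≤ q := by
      by_contra hneg
      push_neg at hneg
      have : m * q ≤ m * (-2) := mul_le_mul_of_nonneg_left (by omega) (by omega)
      omega
    rcases lt_or_ge (r + 1) m with hc | hc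
    · have e : m * q + r + 1 = m * q + (r + 1) := by ring
      rw [e, phi_eval m j q (r + 1) hm (by omega) (by omega), if_neg (by omega)]
      nlinarith
    · have hrm1 : r = m - 1 := by omega
      have e : m * q + r + 1 = m * (q + 1) + 0 := by rw [hrm1]; ring
      rw [e, phi_eval m j (q + 1) 0 hm le_rfl (by omega), if_pos (by omega)]
      nlinarith

lemma phi_pred_le (m u j k : ℤ) (hm : 1 ≤ m) (hu : 1 ≤ u) (hj0 : 0 ≤ j) (hjm : j ≤ m)
    (h : 2 * k + j ≤ u * m) : phi m j (k - 1) ≤ phi m j k + u := by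
  have hk : m * (k.ediv m) + k.emod m = k := Int.mul_ediv_add_emod k m
  set q := k.ediv m with hq
  set r := k.emod m with hr
  have hr0 : 0 ≤ r := Int.emod_nonneg k (by omega)
  have hrm : r < m := Int.emod_lt_of_pos k (by omega)
  rw [← hk] at h ⊢
  rw [phi_eval m j q r hm hr0 hrm]
  rcases le_or_gt r (m - j) with hA | hA
  · rw [if_pos hA]
    rcases le_or_gt 1 r with hc | hc
    · have e : m * q + r - 1 = m * q + (r - 1) := by ring
      rw [e, phi_eval m j q (r - 1) hm (by omega) (by omega), if_pos (by omega)]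
      have hqu : 2 * q + 1 ≤ u := by
        by_contra hneg
        push_neg at hneg
        have : m * u ≤ m * (2 * q) := mul_le_mul_of_nonneg_left (by omega) (by omega)
        nlinarith
      nlinarith
    · have hr0' : r = 0 := by omega
      have e : m * q + r - 1 = m * (q - 1) + (m - 1) := by rw [hr0']; ring
      rw [e, phi_eval m j (q - 1) (m - 1) hm (by omega) (by omega)]
      have hqu : 2 * q ≤ u := by
        by_contra hneg
        push_neg at hneg
        have : m * (u + 1) ≤ m * (2 * q) := mul_le_mul_of_nonneg_left (by omega) (by omega)
        nlinarith
      rcases le_or_gt (m - 1) (m - j) with h2 | h2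
      · rw [if_pos h2]
        have hj1 : j ≤ 1 := by omega
        nlinarith
      · rw [if_neg (by omega)]
        nlinarith
  · rw [if_neg (by omega)]
    have hc : 1 ≤ r := by omega
    have hqu : 2 * q + 2 ≤ u := by
      by_contra hneg
      push_neg at hneg
      have : m * u ≤ m * (2 * q + 1) := mul_le_mul_of_nonneg_left (by omega) (by omega)
      nlinarith
    have e : m * q + r - 1 = m * q + (r - 1) := by ring
    rw [e, phi_eval m j q (r - 1) hm (by omega) (by omega)]
    rcases le_or_gt (r - 1) (m - j) with h2 | h2
    · rw [if_pos h2]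
      have hrv : r = m - j + 1 := by omega
      nlinarith
    · rw [if_neg (by omega)]
      nlinarith

/-- For `m, u ≥ 1`, `0 ≤ j ≤ m`, `0 ≤ j' ≤ um`, `j' ≡ j (mod 2)`:
`−φ(m,j,(j'−j)/2) ≤ min(−φ(m,j,−(j'+j)/2 − 1), u − φ(m,j,−(j'+j)/2 + 1))`. -/
theorem phi_min_inequality (m u j j' : ℤ) (hm : 1 ≤ m) (hu : 1 ≤ u)
    (hj0 : 0 ≤ j) (hjm : j ≤ m) (hj'0 : 0 ≤ j') (hj'um : j' ≤ u * m)
    (hpar : 2 ∣ j' - j) :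
    -phi m j ((j' - j) / 2) ≤
      min (-phi m j (-((j' + j) / 2) - 1)) (u - phi m j (-((j' + j) / 2) + 1)) := by
  set k := (j' - j) / 2 with hkdef
  have hk2 : 2 * k = j' - j := by omega
  have e1 : -((j' + j) / 2) - 1 = -(k + 1) - j := by omega
  have e2 : -((j' + j) / 2) + 1 = -(k - 1) - j := by omega
  rw [e1, e2, phi_symm m j (k + 1) hm hj0 hjm, phi_symm m j (k - 1) hm hj0 hjm]
  refine le_min ?_ ?_
  · have := phi_succ_le m j k hm hj0 hjm (by omega)
    omega
  · have := phi_pred_le m u j k hm hu hj0 hjm (by omega)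
    omega
end

section
/- Let m ≥ 1, u ≥ 1, j, j' be integers with 0 ≤ j ≤ m, 0 ≤ j' ≤ um, j' ≡ j (mod 2), and suppose j ≤ j' and either (u is even and j' ≤ um − j) or (u is odd and j' ≤ um − (m − j)). Then the strict inequality −φ(m,j,(j'−j)/2) < min( −φ(m,j,−(j'+j)/2 − 1), u − φ(m,j,−(j'+j)/2 + 1) ) holds. -/
set_option maxHeartbeats 1000000

lemma lbA (m j k t : ℤ) (hm : 1 ≤ m) (hj0 : 0 ≤ j) (hjm : j ≤ m) :
    -m * t ^ 2 + t * (2 * k + j - m) + k ≤ -phi m j k := by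
  obtain ⟨q, r, rfl, hr0, hrm⟩ : ∃ q r, k = m * q + r ∧ 0 ≤ r ∧ r < m :=
    ⟨k.ediv m, k.emod m, (Int.mul_ediv_add_emod k m).symm,
      Int.emod_nonneg k (by omega), Int.emod_lt_of_pos k (by omega)⟩
  rw [phi_eval m j q r hm hr0 hrm]
  split_ifs with h
  · rcases lt_trichotomy t q with ht | rfl | ht
    · have h1 : (0:ℤ) ≤ q - t - 1 := by omega
      nlinarith [mul_nonneg (by omega : (0:ℤ) ≤ q - t)
        (by nlinarith : (0:ℤ) ≤ m * (q - t - 1) + 2 * r + j)]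
    · nlinarith []
    · rcases eq_or_lt_of_le (by omega : q + 1 ≤ t) with rfl | ht2
      · nlinarith []
      · have h1 : (0:ℤ) ≤ t - q - 1 := by omega
        nlinarith [mul_nonneg (by omega : (0:ℤ) ≤ t - q)
          (by nlinarith : (0:ℤ) ≤ m * (t - q - 1) + 2 * (m - j - r) + j)]
  · push_neg at h
    rcases lt_trichotomy t q with ht | rfl | ht
    · have h1 : (0:ℤ) ≤ q - t - 1 := by omega
      nlinarith [mul_nonneg (by omega : (0:ℤ) ≤ q - t)
        (by nlinarith : (0:ℤ) ≤ m * (q - t - 1) + 2 * r + j)]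
    · nlinarith []
    · rcases eq_or_lt_of_le (by omega : q + 1 ≤ t) with rfl | ht2
      · nlinarith []
      · have h1 : (0:ℤ) ≤ t - q - 2 := by omega
        nlinarith [mul_nonneg (by omega : (0:ℤ) ≤ t - q)
          (by nlinarith : (0:ℤ) ≤ m * (t - q - 2) + 3 * m - 2 * r - j)]

lemma lbB (m j k t : ℤ) (hm : 1 ≤ m) (hj0 : 0 ≤ j) (hjm : j ≤ m) :
    -m * t ^ 2 + t * (2 * k + j - 2 * m) + (2 * k + j - m) ≤ -phi m j k := by
  obtain ⟨q, r, rfl, hr0, hrm⟩ : ∃ q r, k = m * q + r ∧ 0 ≤ r ∧ r < m :=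
    ⟨k.ediv m, k.emod m, (Int.mul_ediv_add_emod k m).symm,
      Int.emod_nonneg k (by omega), Int.emod_lt_of_pos k (by omega)⟩
  rw [phi_eval m j q r hm hr0 hrm]
  split_ifs with h
  · rcases le_or_gt t (q - 1) with ht | ht
    · nlinarith [mul_nonneg (by omega : (0:ℤ) ≤ q - t - 1)
        (by nlinarith [mul_nonneg (by omega : (0:ℤ) ≤ q - t - 1) (by omega : (0:ℤ) ≤ m - 1)] :
          (0:ℤ) ≤ m * (q - t - 1) + 2 * r + j)]
    · rcases eq_or_lt_of_le (by omega : q ≤ t) with rfl | ht2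
      · nlinarith []
      · have h1 : (0:ℤ) ≤ t - q - 1 := by omega
        nlinarith [mul_nonneg (by omega : (0:ℤ) ≤ t - q + 1)
          (by nlinarith : (0:ℤ) ≤ m * (t - q - 1) + 2 * (m - j - r) + j)]
  · push_neg at h
    rcases lt_trichotomy t q with ht | rfl | ht
    · rcases eq_or_lt_of_le (by omega : t ≤ q - 1) with rfl | ht2
      · nlinarith []
      · nlinarith [mul_nonneg (by omega : (0:ℤ) ≤ q - t)
          (by nlinarith [mul_nonneg (by omega : (0:ℤ) ≤ q - t - 2) (by omega : (0:ℤ) ≤ m - 1)] :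
            (0:ℤ) ≤ m * (q - t - 2) + 2 * r + j)]
    · nlinarith []
    · have h1 : (0:ℤ) ≤ t - q - 1 := by omega
      nlinarith [mul_nonneg (by omega : (0:ℤ) ≤ t - q)
        (by nlinarith : (0:ℤ) ≤ m * (t - q - 1) + 3 * m - 2 * r - j)]

/-- Arithmetic core of Theorem 1.2 of the paper: for `m, u ≥ 1`, `0 ≤ j ≤ m`,
`0 ≤ j' ≤ um`, `j' ≡ j (mod 2)`, with `j ≤ j'` and either (`u` even and
`j' ≤ um − j`) or (`u` odd and `j' ≤ um − (m − j)`), the strict inequality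
`−φ(m,j,(j'−j)/2) < min(−φ(m,j,−(j'+j)/2 − 1), u − φ(m,j,−(j'+j)/2 + 1))` holds. -/
theorem phi_strict_inequality (m u j j' : ℤ) (hm : 1 ≤ m) (hu : 1 ≤ u)
    (hj0 : 0 ≤ j) (hjm : j ≤ m) (hj'0 : 0 ≤ j') (hj'um : j' ≤ u * m)
    (hpar : 2 ∣ j' - j) (hjj' : j ≤ j')
    (hcase : (Even u ∧ j' ≤ u * m - j) ∨ (Odd u ∧ j' ≤ u * m - (m - j))) :
    -phi m j ((j' - j) / 2) <
      min (-phi m j (-((j' + j) / 2) - 1)) (u - phi m j (-((j' + j) / 2) + 1)) := by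
  obtain ⟨a, ha⟩ := hpar
  have e1 : (j' - j) / 2 = a := by omega
  have e2 : (j' + j) / 2 = a + j := by omega
  rw [e1, e2]
  have ha0 : 0 ≤ a := by omega
  obtain ⟨q1, r1, rfl, hr0, hrm⟩ : ∃ q r, a = m * q + r ∧ 0 ≤ r ∧ r < m :=
    ⟨a.ediv m, a.emod m, (Int.mul_ediv_add_emod a m).symm,
      Int.emod_nonneg a (by omega), Int.emod_lt_of_pos a (by omega)⟩
  have hq0 : 0 ≤ q1 := by
    by_contra hq
    push_neg at hq
    nlinarith [mul_nonneg (by omega : (0:ℤ) ≤ -q1 - 1) (by omega : (0:ℤ) ≤ m)]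
  rw [lt_min_iff]
  have lb1A := lbA m j (-(m * q1 + r1 + j) - 1) (-q1 - 1) hm hj0 hjm
  have lb1B := lbB m j (-(m * q1 + r1 + j) - 1) (-q1 - 2) hm hj0 hjm
  have lb2B := lbB m j (-(m * q1 + r1 + j) + 1) (-q1 - 2) hm hj0 hjm
  rw [phi_eval m j q1 r1 hm hr0 hrm]
  by_cases hbr : r1 ≤ m - j
  · rw [if_pos hbr]
    refine ⟨by nlinarith [lb1A], ?_⟩
    -- second component, branch 1
    rcases hcase with ⟨⟨v, hv⟩, hle⟩ | ⟨⟨v, hv⟩, hle⟩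
    · -- u even, u = v + v; a + j ≤ v*m
      have hvm : m * q1 + r1 + j ≤ v * m := by nlinarith [hle, hv]
      by_cases hqv : q1 ≤ v - 1
      · have lb := lbA m j (-(m * q1 + r1 + j) + 1) (-q1 - 1) hm hj0 hjm
        nlinarith [lb]
      · -- q1 = v, r1 = 0, j = 0
        have hq1v : q1 = v := by
          by_contra hne
          have : v + 1 ≤ q1 := by omega
          nlinarith [mul_nonneg (by omega : (0:ℤ) ≤ q1 - v) (by omega : (0:ℤ) ≤ m)]
        subst hq1v
        have hr1 : r1 = 0 := by linarith
        have hj : j = 0 := by linarith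
        subst hr1; subst hj
        have lb := lbA m 0 (-(m * q1 + 0 + 0) + 1) (-q1) hm le_rfl (by omega)
        nlinarith [lb]
    · -- u odd, u = 2v+1; a ≤ v*m
      have hvm : m * q1 + r1 ≤ v * m := by nlinarith [hle, hv]
      by_cases hqv : q1 ≤ v - 1
      · have lb := lbA m j (-(m * q1 + r1 + j) + 1) (-q1 - 1) hm hj0 hjm
        nlinarith [lb]
      · have hq1v : q1 = v := by
          by_contra hne
          have : v + 1 ≤ q1 := by omega
          nlinarith [mul_nonneg (by omega : (0:ℤ) ≤ q1 - v) (by omega : (0:ℤ) ≤ m)]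
        subst hq1v
        have hr1 : r1 = 0 := by linarith
        subst hr1
        have lb := lbB m j (-(m * q1 + 0 + j) + 1) (-q1 - 1) hm hj0 hjm
        nlinarith [lb]
  · rw [if_neg hbr]
    push_neg at hbr
    refine ⟨by nlinarith [lb1B], ?_⟩
    rcases hcase with ⟨⟨v, hv⟩, hle⟩ | ⟨⟨v, hv⟩, hle⟩
    · -- even: m*(q1+1) + 1 ≤ v*m hence q1 + 2 ≤ v
      have hvm : m * q1 + r1 + j ≤ v * m := by nlinarith [hle, hv]
      have h1 : 1 ≤ m * (v - q1 - 1) := by nlinarith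
      have h2 : q1 + 2 ≤ v := by
        by_contra hco
        push_neg at hco
        nlinarith [mul_nonneg (by omega : (0:ℤ) ≤ m) (by omega : (0:ℤ) ≤ q1 + 1 - v)]
      nlinarith [lb2B]
    · have hvm : m * q1 + r1 ≤ v * m := by nlinarith [hle, hv]
      have h1 : 1 ≤ m * (v - q1) := by nlinarith
      have h2 : q1 + 1 ≤ v := by
        by_contra hco
        push_neg at hco
        nlinarith [mul_nonneg (by omega : (0:ℤ) ≤ m) (by omega : (0:ℤ) ≤ q1 - v)]
      nlinarith [lb2B]
end

section
/- For all integers m ≥ 1, j with 0 ≤ j ≤ m/2, and all k ∈ (1/2)ℤ, one has ψ(m,j,−(j+k)) = ψ(m,j,k). -/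
open Classical in
/-- The δ-coefficient function `ψ(m,j,k)` for type `A₂⁽²⁾`, for half-integer
arguments `k ∈ (1/2)ℤ`: writing `k = (m/2)*q + r` with `q ∈ ℤ` and `0 ≤ r < m/2`
(so `q = ⌊2k/m⌋` when `1 ≤ m`), set `ψ(m,j,k) = -q*(k+r+j) + c(r)` where
`c(r) = -r` if `0 ≤ r ≤ m/2 - j`; `c(r) = m/2 - j - 2r` if `m/2 - j ≤ r < m/2`
and `r - m/2 ∈ ℤ`; `c(r) = (m-1)/2 - j - 2r` if `(m-1)/2 - j ≤ r < m/2` and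
`r - (m-1)/2 ∈ ℤ` (these expressions agree on overlaps). -/
noncomputable def psi (m j : ℤ) (k : ℚ) : ℚ :=
  let q : ℤ := ⌊2 * k / (m : ℚ)⌋
  let r : ℚ := k - (m : ℚ) / 2 * (q : ℚ)
  (-(q : ℚ)) * (k + r + (j : ℚ)) +
    (if r ≤ (m : ℚ) / 2 - (j : ℚ) then -r
     else if ∃ t : ℤ, r - (m : ℚ) / 2 = (t : ℚ) then (m : ℚ) / 2 - (j : ℚ) - 2 * r
     else ((m : ℚ) - 1) / 2 - (j : ℚ) - 2 * r)

/-- `k` lies in the half-integer lattice `(1/2)ℤ`. -/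
def IsHalfInt (k : ℚ) : Prop := ∃ t : ℤ, 2 * k = (t : ℚ)

private lemma floor_eq_of_bounds (m : ℤ) (hm : 1 ≤ m) (q : ℤ) (x : ℚ)
    (h1 : (m : ℚ) / 2 * q ≤ x) (h2 : x < (m : ℚ) / 2 * (q + 1)) :
    ⌊2 * x / (m : ℚ)⌋ = q := by
  have hmq : (0 : ℚ) < m := by exact_mod_cast hm
  rw [Int.floor_eq_iff]
  constructor
  · rw [le_div_iff₀ hmq]; nlinarith
  · rw [div_lt_iff₀ hmq]; push_cast; nlinarith

open Classical in
private lemma psi_eval (m j : ℤ) (k : ℚ) (q : ℤ) (hq : ⌊2 * k / (m : ℚ)⌋ = q) :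
    psi m j k = (-(q : ℚ)) * (k + (k - (m : ℚ) / 2 * q) + (j : ℚ)) +
      (if k - (m : ℚ) / 2 * q ≤ (m : ℚ) / 2 - (j : ℚ) then -(k - (m : ℚ) / 2 * q)
       else if ∃ t : ℤ, (k - (m : ℚ) / 2 * q) - (m : ℚ) / 2 = (t : ℚ) then
         (m : ℚ) / 2 - (j : ℚ) - 2 * (k - (m : ℚ) / 2 * q)
       else ((m : ℚ) - 1) / 2 - (j : ℚ) - 2 * (k - (m : ℚ) / 2 * q)) := by
  simp only [psi, hq]

/-- For all integers `m ≥ 1`, `0 ≤ j ≤ m/2`, and all `k ∈ (1/2)ℤ`,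
one has `ψ(m,j,−(j+k)) = ψ(m,j,k)`. -/
theorem psi_reflection (m j : ℤ) (hm : 1 ≤ m) (hj0 : 0 ≤ j) (hjm : 2 * j ≤ m)
    (k : ℚ) (hk : IsHalfInt k) :
    psi m j (-((j : ℚ) + k)) = psi m j k := by
  have hmq : (0 : ℚ) < m := by exact_mod_cast hm
  have hjq : (0 : ℚ) ≤ j := by exact_mod_cast hj0
  have hjmq : 2 * (j : ℚ) ≤ m := by exact_mod_cast hjm
  set q : ℤ := ⌊2 * k / (m : ℚ)⌋ with hqdef
  have hq1 : (m : ℚ) / 2 * q ≤ k := by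
    have h := Int.floor_le (2 * k / (m : ℚ))
    rw [le_div_iff₀ hmq] at h
    rw [← hqdef] at h
    nlinarith
  have hq2 : k < (m : ℚ) / 2 * (q + 1) := by
    have h := Int.lt_floor_add_one (2 * k / (m : ℚ))
    rw [div_lt_iff₀ hmq] at h
    rw [← hqdef] at h
    push_cast at h
    nlinarith
  set r : ℚ := k - (m : ℚ) / 2 * q with hrdef
  have hr0 : 0 ≤ r := by rw [hrdef]; linarith
  have hr1 : r < (m : ℚ) / 2 := by rw [hrdef]; nlinarith
  rw [psi_eval m j k q hqdef.symm]
  by_cases hA : (j : ℚ) + r ≤ (m : ℚ) / 2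
  · by_cases h0 : (j : ℚ) + r = 0
    · -- j = 0 and r = 0
      have hj : (j : ℚ) = 0 := by linarith
      have hrz : r = 0 := by linarith
      have hkval : k = (m : ℚ) / 2 * q := by rw [hrdef] at hrz; linarith
      have hq' : ⌊2 * (-((j : ℚ) + k)) / (m : ℚ)⌋ = -q := by
        apply floor_eq_of_bounds m hm
        · push_cast; rw [hkval, hj]; ring_nf; linarith
        · push_cast; rw [hkval, hj]; nlinarith
      rw [psi_eval m j (-((j : ℚ) + k)) (-q) hq']
      have c1 : -((j : ℚ) + k) - (m : ℚ) / 2 * ((-q : ℤ) : ℚ) ≤ (m : ℚ) / 2 - j := by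
        push_cast; rw [hkval, hj]; nlinarith
      have c2 : k - (m : ℚ) / 2 * q ≤ (m : ℚ) / 2 - j := by
        rw [← hrdef, hrz, hj]; linarith
      rw [if_pos c1, if_pos c2]
      push_cast
      rw [hkval, hj]
      ring
    · -- 0 < j + r ≤ m/2 : quotient is -q-1
      have hpos : 0 < (j : ℚ) + r := lt_of_le_of_ne (by linarith) (Ne.symm h0)
      have hq' : ⌊2 * (-((j : ℚ) + k)) / (m : ℚ)⌋ = -q - 1 := by
        apply floor_eq_of_bounds m hm
        · rw [hrdef] at hA; push_cast; nlinarith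
        · rw [hrdef] at hpos; push_cast; nlinarith
      rw [psi_eval m j (-((j : ℚ) + k)) (-q - 1) hq']
      have c1 : -((j : ℚ) + k) - (m : ℚ) / 2 * ((-q - 1 : ℤ) : ℚ) ≤ (m : ℚ) / 2 - j := by
        push_cast; rw [hrdef] at hr0; nlinarith
      have c2 : k - (m : ℚ) / 2 * q ≤ (m : ℚ) / 2 - j := by
        rw [← hrdef]; linarith
      rw [if_pos c1, if_pos c2]
      push_cast
      ring
  · -- m/2 < j + r : quotient is -q-2
    push_neg at hA
    have hq' : ⌊2 * (-((j : ℚ) + k)) / (m : ℚ)⌋ = -q - 2 := by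
      apply floor_eq_of_bounds m hm
      · rw [hrdef] at hr1; push_cast; nlinarith
      · rw [hrdef] at hA; push_cast; nlinarith
    rw [psi_eval m j (-((j : ℚ) + k)) (-q - 2) hq']
    have c1 : ¬ (-((j : ℚ) + k) - (m : ℚ) / 2 * ((-q - 2 : ℤ) : ℚ) ≤ (m : ℚ) / 2 - j) := by
      push_cast; rw [hrdef] at hr1; push_neg; nlinarith
    have c2 : ¬ (k - (m : ℚ) / 2 * q ≤ (m : ℚ) / 2 - j) := by
      rw [← hrdef]; push_neg; linarith
    rw [if_neg c1, if_neg c2]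
    have hrel : -((j : ℚ) + k) - (m : ℚ) / 2 * ((-q - 2 : ℤ) : ℚ) - (m : ℚ) / 2
        = -(((k - (m : ℚ) / 2 * q) - (m : ℚ) / 2)) - (j : ℚ) := by
      push_cast; ring
    by_cases hE : ∃ t : ℤ, (k - (m : ℚ) / 2 * q) - (m : ℚ) / 2 = (t : ℚ)
    · obtain ⟨t, ht⟩ := hE
      have hE' : ∃ t : ℤ, -((j : ℚ) + k) - (m : ℚ) / 2 * ((-q - 2 : ℤ) : ℚ) - (m : ℚ) / 2
          = (t : ℚ) := by
        refine ⟨-t - j, ?_⟩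
        rw [hrel, ht]; push_cast; ring
      rw [if_pos hE', if_pos ⟨t, ht⟩]
      push_cast; ring
    · have hE' : ¬ ∃ t : ℤ, -((j : ℚ) + k) - (m : ℚ) / 2 * ((-q - 2 : ℤ) : ℚ) - (m : ℚ) / 2
          = (t : ℚ) := by
        rintro ⟨s, hs⟩
        rw [hrel] at hs
        exact hE ⟨-s - j, by push_cast; linarith⟩
      rw [if_neg hE', if_neg hE]
      push_cast; ring
end

section
/- Let m ≥ 1 be an integer, u ≥ 1 an odd integer, and j, j' integers with 0 ≤ j ≤ m/2 and 0 ≤ j' ≤ um/2. For n ∈ ℤ define N(n) = −ψ(m,j,(j'−j)/2 − n(um+3)/2) + u·n·(j' + 1 − n(um+3)/2). Then N, viewed as a function of n ∈ ℤ, attains its minimum at n = 0; i.e., N(n) ≥ N(0) for every n ∈ ℤ. -/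
def Gz (m j R : ℤ) : ℤ :=
  if R ≤ m - 2*j then R * (m - 2*j - R)
  else if (R - m) % 2 = 0 then (m-R)*(2*j-(m-R))
  else (m-R)*(2*j-(m-R)) + m

lemma gz_low {m j R : ℤ} (h : R ≤ m - 2*j) : Gz m j R = R*(m-2*j-R) := by
  unfold Gz; rw [if_pos h]

lemma gz_up_even {m j R : ℤ} (h : m - 2*j < R) (h2 : (R - m) % 2 = 0) :
    Gz m j R = (m-R)*(2*j-(m-R)) := by
  unfold Gz; rw [if_neg (by omega), if_pos h2]

lemma gz_up_odd {m j R : ℤ} (h : m - 2*j < R) (h2 : (R - m) % 2 ≠ 0) :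
    Gz m j R = (m-R)*(2*j-(m-R)) + m := by
  unfold Gz; rw [if_neg (by omega), if_neg h2]

lemma gz_nonneg {m j R : ℤ} (hm : 1 ≤ m) (hj0 : 0 ≤ j) (hjm : 2*j ≤ m)
    (hR0 : 0 ≤ R) (hRm : R < m) : 0 ≤ Gz m j R := by
  unfold Gz; split_ifs with h1 h2
  · exact mul_nonneg hR0 (by omega)
  · exact mul_nonneg (by omega) (by omega)
  · nlinarith [mul_nonneg (show (0:ℤ) ≤ m - R by omega) (show (0:ℤ) ≤ 2*j-(m-R) by omega)]

lemma gz_lb1 {m j R : ℤ} (hm : 1 ≤ m) (hR0 : 0 ≤ R) (hRm : R < m) :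
    R*(m-2*j-R) ≤ Gz m j R := by
  unfold Gz; split_ifs with h1 h2
  · exact le_refl _
  · nlinarith [mul_nonneg (show (0:ℤ) ≤ m by omega) (show (0:ℤ) ≤ R + 2*j - m by omega)]
  · nlinarith [mul_nonneg (show (0:ℤ) ≤ m by omega) (show (0:ℤ) ≤ R + 2*j - m by omega)]

lemma gz_lb2 {m j R : ℤ} (hm : 1 ≤ m) (hR0 : 0 ≤ R) (hRm : R < m) :
    (m-R)*(2*j-(m-R)) ≤ Gz m j R := by
  unfold Gz; split_ifs with h1 h2
  · nlinarith [mul_nonneg (show (0:ℤ) ≤ m by omega) (show (0:ℤ) ≤ m - 2*j - R by omega)]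
  · exact le_refl _
  · linarith

lemma gz_cases {m j R : ℤ} (hm : 1 ≤ m) :
    (R ≤ m - 2*j ∧ Gz m j R = R*(m-2*j-R)) ∨
    (m - 2*j < R ∧ Gz m j R ≤ (m-R)*(2*j-(m-R)) + m) := by
  unfold Gz; split_ifs with h1 h2
  · exact Or.inl ⟨h1, rfl⟩
  · exact Or.inr ⟨by omega, by linarith⟩
  · exact Or.inr ⟨by omega, le_refl _⟩

lemma gz_ub_left {m j R : ℤ} (hm : 1 ≤ m) (hj0 : 0 ≤ j) (hjm : 2*j ≤ m)
    (hR0 : 0 ≤ R) (hRm : R < m) : Gz m j R ≤ m*R + m := by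
  unfold Gz; split_ifs with h1 h2
  · nlinarith [mul_nonneg hR0 (show (0:ℤ) ≤ 2*j by omega)]
  · nlinarith [mul_nonneg (show (0:ℤ) ≤ m - R by omega) (show (0:ℤ) ≤ R - (2*j-(m-R)) by omega),
      mul_nonneg (show (0:ℤ) ≤ R by omega) hR0]
  · nlinarith [mul_nonneg (show (0:ℤ) ≤ m - R by omega) (show (0:ℤ) ≤ R - (2*j-(m-R)) by omega)]

lemma gz_ub_right {m j R : ℤ} (hm : 1 ≤ m) (hj0 : 0 ≤ j) (hjm : 2*j ≤ m)
    (hR0 : 0 ≤ R) (hRm : R < m) : Gz m j R ≤ m*(m-R) + m := by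
  unfold Gz; split_ifs with h1 h2
  · nlinarith [mul_nonneg hR0 (show (0:ℤ) ≤ R by omega)]
  · nlinarith [mul_nonneg (show (0:ℤ) ≤ m - R by omega) (show (0:ℤ) ≤ m - (2*j-(m-R)) by omega)]
  · nlinarith [mul_nonneg (show (0:ℤ) ≤ m - R by omega) (show (0:ℤ) ≤ m - (2*j-(m-R)) by omega)]

lemma psi_eval_s13 (m j S : ℤ) (hm : 1 ≤ m) :
    psi m j ((S : ℚ)/2) = -((S:ℚ)^2 + 2*(j:ℚ)*(S:ℚ) + ((Gz m j (S % m) : ℤ) : ℚ)) / (2*(m:ℚ)) := by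
  have hm0 : (0:ℚ) < (m:ℚ) := by exact_mod_cast hm.trans_lt' (by norm_num)
  have hSmod := Int.emod_nonneg S (by omega : (m:ℤ) ≠ 0)
  have hSmod' := Int.emod_lt_of_pos S (by omega : (0:ℤ) < m)
  have hSrel : (S:ℚ) = (m:ℚ) * ((S / m : ℤ) : ℚ) + ((S % m : ℤ) : ℚ) := by
    exact_mod_cast congrArg (fun x : ℤ => (x : ℚ)) (Int.mul_ediv_add_emod S m).symm
  have hq : ⌊2 * ((S:ℚ)/2) / (m:ℚ)⌋ = S / m := by
    rw [show 2 * ((S:ℚ)/2) / (m:ℚ) = (S:ℚ)/(m:ℚ) by ring]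
    rw [Int.floor_eq_iff]
    constructor
    · rw [le_div_iff₀ hm0]; nlinarith [hSrel, (by exact_mod_cast hSmod : (0:ℚ) ≤ ((S % m : ℤ) : ℚ))]
    · rw [div_lt_iff₀ hm0]; nlinarith [hSrel, (by exact_mod_cast hSmod' : ((S % m : ℤ) : ℚ) < (m:ℚ))]
  have h2m0 : (2*(m:ℚ)) ≠ 0 := by positivity
  have hr : (S:ℚ)/2 - (m:ℚ)/2 * ((S/m : ℤ):ℚ) = ((S % m : ℤ):ℚ)/2 := by
    linear_combination hSrel / 2
  simp only [psi]
  rw [hq, hr]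
  have hparity : ((S % m - m) % 2 = 0) ↔ (∃ t : ℤ, ((S % m : ℤ):ℚ)/2 - (m : ℚ)/2 = (t : ℚ)) := by
    constructor
    · intro h
      refine ⟨(S % m - m)/2, ?_⟩
      have hx : (S % m - m) = 2 * ((S % m - m)/2) := by omega
      have hx' : ((S % m - m : ℤ) : ℚ) = 2 * (((S % m - m)/2 : ℤ) : ℚ) := by exact_mod_cast hx
      push_cast at hx' ⊢
      linarith
    · rintro ⟨t, ht⟩
      have hx : ((S % m : ℤ) : ℚ) - (m:ℚ) = 2 * (t:ℚ) := by linarith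
      have : S % m - m = 2 * t := by exact_mod_cast hx
      omega
  split_ifs with h1 h2
  · have h1' : S % m ≤ m - 2*j := by
      have : ((S % m : ℤ):ℚ) ≤ (m:ℚ) - 2*(j:ℚ) := by linarith
      exact_mod_cast this
    rw [gz_low h1', eq_div_iff h2m0]
    push_cast
    linear_combination ((S:ℚ) + ((S % m : ℤ):ℚ) + 2*(j:ℚ)) * hSrel
  · have h1' : m - 2*j < S % m := by
      by_contra hc
      push_neg at hc
      have : ((S % m : ℤ):ℚ) ≤ (m:ℚ) - 2*(j:ℚ) := by exact_mod_cast hc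
      exact h1 (by linarith)
    rw [gz_up_even h1' (hparity.mpr h2), eq_div_iff h2m0]
    push_cast
    linear_combination ((S:ℚ) + ((S % m : ℤ):ℚ) + 2*(j:ℚ)) * hSrel
  · have h1' : m - 2*j < S % m := by
      by_contra hc
      push_neg at hc
      have : ((S % m : ℤ):ℚ) ≤ (m:ℚ) - 2*(j:ℚ) := by exact_mod_cast hc
      exact h1 (by linarith)
    have h2' : (S % m - m) % 2 ≠ 0 := fun hc => h2 (hparity.mp hc)
    rw [gz_up_odd h1' h2', eq_div_iff h2m0]
    push_cast
    linear_combination ((S:ℚ) + ((S % m : ℤ):ℚ) + 2*(j:ℚ)) * hSrel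

lemma gz_up_le {m j R : ℤ} (hm : 1 ≤ m) (h : m - 2*j < R) :
    Gz m j R ≤ (m-R)*(2*j-(m-R)) + m := by
  unfold Gz; rw [if_neg (by omega)]; split_ifs <;> linarith

set_option maxHeartbeats 1000000 in
lemma master (m u j j' n : ℤ) (hm : 1 ≤ m) (hu : 1 ≤ u) (huodd : Odd u)
    (hj0 : 0 ≤ j) (hjm : 2*j ≤ m) (hj'0 : 0 ≤ j') (hj'um : 2*j' ≤ u*m) :
    0 ≤ 3*(u*m+3)*n^2 + (2*u*m - 6*j')*n
        + Gz m j ((j' - j - n*(u*m+3)) % m) - Gz m j ((j' - j) % m) := by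
  have hm0 : (0:ℤ) < m := by omega
  set R0 : ℤ := (j' - j) % m with hR0def
  set t : ℤ := (j' - j) / m with htdef
  have ht : j' - j = m*t + R0 := by
    rw [hR0def, htdef]; linarith [Int.mul_ediv_add_emod (j'-j) m]
  have hR00 : 0 ≤ R0 := Int.emod_nonneg _ (by omega)
  have hR0m : R0 < m := Int.emod_lt_of_pos _ hm0
  set Rn : ℤ := (R0 - 3*n) % m with hRndef
  set v : ℤ := (R0 - 3*n) / m with hvdef
  have hv : R0 - 3*n = m*v + Rn := by
    rw [hRndef, hvdef]; linarith [Int.mul_ediv_add_emod (R0-3*n) m]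
  have hRn0 : 0 ≤ Rn := Int.emod_nonneg _ (by omega)
  have hRnm : Rn < m := Int.emod_lt_of_pos _ hm0
  have key : (j' - j - n*(u*m+3)) % m = Rn := by
    rw [show j' - j - n*(u*m+3) = (R0 - 3*n) + m * (t - n*u) by linarith [ht]]
    rw [Int.add_mul_emod_self_left, hRndef]
  rw [key]
  clear_value R0 t Rn v
  clear hR0def htdef hRndef hvdef key
  have hGn0 : 0 ≤ Gz m j Rn := gz_nonneg hm hj0 hjm hRn0 hRnm
  have hG00 : 0 ≤ Gz m j R0 := gz_nonneg hm hj0 hjm hR00 hR0m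
  have h2t : 2*t + 1 ≤ u := by
    obtain ⟨c, hc⟩ := huodd
    rcases le_or_gt (2*t+1) u with h | h
    · exact h
    · exfalso
      have h1 : u + 1 ≤ 2*t := by omega
      have h2 := mul_le_mul_of_nonneg_left h1 (le_of_lt hm0)
      nlinarith
  have htm1 : -1 ≤ t := by
    rcases le_or_gt (-1) t with h | h
    · exact h
    · exfalso
      have h1 : t ≤ -2 := by omega
      have h2 := mul_le_mul_of_nonneg_left h1 (le_of_lt hm0)
      nlinarith
  have hu3 : u = 1 ∨ 3 ≤ u := by obtain ⟨c, hc⟩ := huodd; omega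
  rcases lt_trichotomy n 0 with hn | hn | hn
  · -- n ≤ -1
    have hn1 : n ≤ -1 := by omega
    have hv0 : 0 ≤ v := by
      rcases le_or_gt 0 v with h | h
      · exact h
      · exfalso
        have h2 : m*v ≤ m*(-1) := mul_le_mul_of_nonneg_left (by omega) hm0.le
        omega
    rcases eq_or_lt_of_le hv0 with hv1 | hv1
    · -- v = 0 : no wrap
      have hveq : Rn = R0 - 3*n := by rw [← hv1] at hv; linarith
      rw [hveq]
      rcases gz_cases (m := m) (j := j) (R := R0) hm with ⟨hbr, hGeq⟩ | ⟨hbr, hGle⟩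
      · -- lower branch at R0
        have hGn := gz_lb1 (m := m) (j := j) (R := R0 - 3*n) hm (by omega) (by omega)
        have hid : 3*(u*m+3)*n^2 + (2*u*m - 6*j')*n
            + (R0-3*n)*(m-2*j-(R0-3*n)) - R0*(m-2*j-R0)
            = m*(3*u*n^2+2*u*n-6*t*n-3*n) := by linear_combination (-6*n)*ht
        have hX : 0 ≤ 3*u*n^2+2*u*n-6*t*n-3*n := by
          rcases le_or_gt 0 t with ht0 | ht0
          · nlinarith only [hn1, mul_nonneg ht0 (show (0:ℤ) ≤ -n by omega),
              mul_nonneg (mul_nonneg (show (0:ℤ) ≤ u by omega) (show (0:ℤ) ≤ -n by omega))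
                (show (0:ℤ) ≤ -3*n-2 by omega)]
          · exfalso
            have ht1 : t = -1 := by omega
            rw [ht1] at ht
            omega
        linarith [mul_nonneg hm0.le hX, hid, hGn]
      · -- upper branch at R0
        have hGn := gz_lb2 (m := m) (j := j) (R := R0 - 3*n) hm (by omega) (by omega)
        have hid : 3*(u*m+3)*n^2 + (2*u*m - 6*j')*n
            + (m-(R0-3*n))*(2*j-(m-(R0-3*n))) - ((m-R0)*(2*j-(m-R0)) + m)
            = m*(3*u*n^2+2*u*n-6*t*n-6*n-1) := by linear_combination (-6*n)*ht
        have hX : 0 ≤ 3*u*n^2+2*u*n-6*t*n-6*n-1 := by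
          nlinarith only [mul_nonneg (mul_nonneg (show (0:ℤ) ≤ u - 1 by omega)
              (show (0:ℤ) ≤ -n by omega)) (show (0:ℤ) ≤ -3*n-2 by omega),
            mul_nonneg (show (0:ℤ) ≤ -n-1 by omega) (show (0:ℤ) ≤ -3*n+1 by omega),
            mul_nonneg (show (0:ℤ) ≤ 6*t+6 by omega) (show (0:ℤ) ≤ -n by omega)]
        linarith [mul_nonneg hm0.le hX, hid, hGn]
    · -- v ≥ 1 : wrap
      have hvv : 1 ≤ v := by omega
      have hmv : m*1 ≤ m*v := mul_le_mul_of_nonneg_left hvv hm0.le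
      have hR0big : m + 3*n ≤ R0 := by omega
      rcases (show (5 ≤ u ∨ n ≤ -2) ∨ ((u = 1 ∨ u = 3) ∧ n = -1) by
          obtain ⟨c, hc⟩ := huodd; omega) with hgen | ⟨hu13, hnn1⟩
      · -- generic wrap for n negative
        have hub := gz_ub_right (m := m) (j := j) (R := R0) hm hj0 hjm hR00 hR0m
        have hP : m*(m-R0) ≤ m*(-(3*n)) := mul_le_mul_of_nonneg_left (by omega) hm0.le
        have hjn : 0 ≤ -(6*j'*n) := by
          have h1 : 0 ≤ 6*j' := by omega
          nlinarith only [mul_nonneg h1 (show (0:ℤ) ≤ -n by omega)]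
        have hY : 0 ≤ 3*u*m*n^2 + 2*u*m*n + 3*m*n - m := by
          rcases hgen with hu5 | hn2
          · have q1 : 0 ≤ 3*n^2+2*n-1 := by
              nlinarith only [mul_nonneg (show (0:ℤ) ≤ -n-1 by omega) (show (0:ℤ) ≤ -3*n+1 by omega)]
            have q2 : 0 ≤ 15*n^2+13*n-2 := by
              nlinarith only [mul_nonneg (show (0:ℤ) ≤ -n-1 by omega) (show (0:ℤ) ≤ -15*n+2 by omega)]
            nlinarith only [hm0, mul_nonneg (mul_nonneg hm0.le (show (0:ℤ) ≤ u-5 by omega)) q1,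
              mul_nonneg hm0.le q2, mul_nonneg hm0.le (show (0:ℤ) ≤ u-5 by omega)]
          · have r1 : 0 ≤ 3*n^2+2*n := by
              nlinarith only [mul_nonneg (show (0:ℤ) ≤ -n by omega) (show (0:ℤ) ≤ -3*n-2 by omega)]
            have r2 : 0 ≤ 3*n^2+5*n-2 := by
              nlinarith only [mul_nonneg (show (0:ℤ) ≤ -n-2 by omega) (show (0:ℤ) ≤ -3*n+1 by omega)]
            nlinarith only [hm0, mul_nonneg (mul_nonneg hm0.le (show (0:ℤ) ≤ u-1 by omega)) r1,
              mul_nonneg hm0.le r2]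
        nlinarith only [hY, hGn0, hub, hP, hjn, sq_nonneg n]
      · -- u ∈ {1,3}, n = -1
        subst hnn1
        have hum : m ≤ u*m := le_mul_of_one_le_left hm0.le hu
        rcases le_or_gt m 2 with hm2 | hm3
        · -- tiny m
          have hub := gz_ub_right (m := m) (j := j) (R := R0) hm hj0 hjm hR00 hR0m
          have h1 : m*(m-R0) ≤ 2*2 := by
            nlinarith only [hm2, hR00, hR0m, hm0, mul_nonneg hm0.le hR00]
          nlinarith only [h1, hub, hGn0, hj'0, hm0, hu, hum]
        · -- m ≥ 3 : v = 1, Rn = R0 + 3 - m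
          have hvle1 : v ≤ 1 := by
            by_contra hc
            push_neg at hc
            have h2 : m*2 ≤ m*v := mul_le_mul_of_nonneg_left (by omega) hm0.le
            omega
          have hveq1 : v = 1 := by omega
          have hRneq : Rn = R0 + 3 - m := by rw [hveq1] at hv; linarith
          have hR0b : m - 3 ≤ R0 := by omega
          rcases le_or_gt R0 (m - 2*j) with hbr | hbr
          · -- lower branch at R0, so t ≥ 0
            have ht0 : 0 ≤ t := by
              rcases le_or_gt 0 t with h | h
              · exact h
              · exfalso
                have ht1 : t = -1 := by omega
                rw [ht1] at ht
                omega
            have hmt : 0 ≤ m*t := mul_nonneg hm0.le ht0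
            rw [gz_low hbr]
            nlinarith only [hGn0, ht, hmt, hj0, hm0, hu, hum, hR00, hbr, hR0b,
              mul_nonneg hR00 (show (0:ℤ) ≤ 3 - (m-2*j-R0) by omega)]
          · -- upper branch at R0
            rcases le_or_gt 0 t with ht0 | ht0
            · have hmt : 0 ≤ m*t := mul_nonneg hm0.le ht0
              have hub2 := gz_up_le (m := m) (j := j) (R := R0) hm hbr
              nlinarith only [hGn0, ht, hmt, hj0, hm0, hu, hum, hR00, hbr, hR0b, hub2, hR0m,
                mul_nonneg (show (0:ℤ) ≤ 3-(m-R0) by omega)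
                  (show (0:ℤ) ≤ 2*j-(m-R0) by omega)]
            · -- t = -1 : exact analysis
              have ht1 : t = -1 := by omega
              rw [ht1] at ht
              have hj'eq : j' = R0 + j - m := by omega
              rcases (show R0 = m-1 ∨ R0 = m-2 ∨ R0 = m-3 by omega) with hT | hT | hT
              · -- T0 = 1, Rn = 2
                rw [hT] at hRneq hbr hj'eq ⊢
                rw [hRneq, show m-1+3-m = (2:ℤ) by ring]
                rw [gz_up_odd hbr (by omega)]
                rcases le_or_gt 2 (m - 2*j) with hc | hc
                · rw [gz_low (by omega)]
                  nlinarith only [hj'eq, hum, hm0, hj0, hc, hm3]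
                · rcases (show 2*j = m ∨ 2*j = m - 1 by omega) with hp | hp
                  · rw [gz_up_even (by omega) (by omega)]
                    nlinarith only [hj'eq, hum, hm0, hj0, hp, hm3]
                  · rw [gz_up_odd (by omega) (by omega)]
                    nlinarith only [hj'eq, hum, hm0, hj0, hp, hm3]
              · -- T0 = 2, Rn = 1
                rw [hT] at hRneq hbr hj'eq ⊢
                rw [hRneq, show m-2+3-m = (1:ℤ) by ring]
                rw [gz_up_even hbr (by omega)]
                rcases le_or_gt 1 (m - 2*j) with hc | hc
                · rw [gz_low (by omega)]
                  nlinarith only [hj'eq, hum, hm0, hj0, hc, hm3]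
                · have hp : 2*j = m := by omega
                  rw [gz_up_odd (by omega) (by omega)]
                  nlinarith only [hj'eq, hum, hm0, hj0, hp, hm3]
              · -- T0 = 3, Rn = 0
                rw [hT] at hRneq hbr hj'eq ⊢
                rw [hRneq, show m-3+3-m = (0:ℤ) by ring]
                rw [gz_up_odd hbr (by omega), gz_low (by omega)]
                nlinarith only [hj'eq, hum, hm0, hj0, hm3, hjm]
  · -- n = 0
    subst hn
    have hveq : Rn = R0 := by
      have hvz : v = 0 := by
        rcases lt_trichotomy v 0 with h | h | h
        · exfalso
          have h2 : m*v ≤ m*(-1) := mul_le_mul_of_nonneg_left (by omega) hm0.le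
          omega
        · exact h
        · exfalso
          have h2 : m*1 ≤ m*v := mul_le_mul_of_nonneg_left (by omega) hm0.le
          omega
      rw [hvz] at hv; linarith
    rw [hveq]
    simp
  · -- n ≥ 1
    have hn1 : 1 ≤ n := by omega
    have hvle : v ≤ 0 := by
      rcases le_or_gt v 0 with h | h
      · exact h
      · exfalso
        have h2 : m*1 ≤ m*v := mul_le_mul_of_nonneg_left (by omega) hm0.le
        omega
    rcases eq_or_lt_of_le hvle with hv1 | hv1
    · -- v = 0 : no wrap
      have hveq : Rn = R0 - 3*n := by rw [hv1] at hv; linarith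
      rw [hveq]
      rcases gz_cases (m := m) (j := j) (R := R0) hm with ⟨hbr, hGeq⟩ | ⟨hbr, hGle⟩
      · -- lower branch at R0
        have hGn := gz_lb1 (m := m) (j := j) (R := R0 - 3*n) hm (by omega) (by omega)
        have hid : 3*(u*m+3)*n^2 + (2*u*m - 6*j')*n
            + (R0-3*n)*(m-2*j-(R0-3*n)) - R0*(m-2*j-R0)
            = m*(3*u*n^2+2*u*n-6*t*n-3*n) := by linear_combination (-6*n)*ht
        have hX : 0 ≤ 3*u*n^2+2*u*n-6*t*n-3*n := by
          nlinarith only [hn1, mul_nonneg (show (0:ℤ) ≤ u-2*t-1 by omega) (show (0:ℤ) ≤ n by omega),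
            mul_nonneg (mul_nonneg (show (0:ℤ) ≤ u by omega) (show (0:ℤ) ≤ n by omega))
              (show (0:ℤ) ≤ 3*n-1 by omega)]
        linarith [mul_nonneg hm0.le hX, hid, hGn]
      · -- upper branch at R0
        have hGn := gz_lb2 (m := m) (j := j) (R := R0 - 3*n) hm (by omega) (by omega)
        have hid : 3*(u*m+3)*n^2 + (2*u*m - 6*j')*n
            + (m-(R0-3*n))*(2*j-(m-(R0-3*n))) - ((m-R0)*(2*j-(m-R0)) + m)
            = m*(3*u*n^2+2*u*n-6*t*n-6*n-1) := by linear_combination (-6*n)*ht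
        have hX : 0 ≤ 3*u*n^2+2*u*n-6*t*n-6*n-1 := by
          rcases hu3 with hu1 | hu1
          · -- u = 1, so t ≤ 0
            rcases (show n = 1 ∨ 2 ≤ n by omega) with hnn | hnn
            · have ht1 : t = -1 := by
                rcases (show t = -1 ∨ t = 0 by omega) with h | h
                · exact h
                · exfalso; rw [h] at ht; rw [hu1] at hj'um; omega
              rw [ht1, hu1, hnn]; norm_num
            · nlinarith only [hnn, hu1, mul_nonneg (show (0:ℤ) ≤ -t by omega) (show (0:ℤ) ≤ n by omega),
                mul_nonneg (show (0:ℤ) ≤ n-2 by omega) (show (0:ℤ) ≤ n by omega)]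
          · nlinarith only [hn1, hu1, mul_nonneg (show (0:ℤ) ≤ u-2*t-1 by omega) (show (0:ℤ) ≤ n by omega),
              mul_nonneg (mul_nonneg (show (0:ℤ) ≤ u by omega) (show (0:ℤ) ≤ n by omega))
                (show (0:ℤ) ≤ 3*n-1 by omega),
              mul_nonneg (show (0:ℤ) ≤ u-3 by omega) (show (0:ℤ) ≤ n by omega)]
        linarith [mul_nonneg hm0.le hX, hid, hGn]
    · -- v ≤ -1 : wrap
      have hmv : m*v ≤ m*(-1) := mul_le_mul_of_nonneg_left (by omega) hm0.le
      have hR0small : R0 ≤ 3*n - 1 := by omega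
      have hub := gz_ub_left (m := m) (j := j) (R := R0) hm hj0 hjm hR00 hR0m
      rcases (show (3 ≤ u ∨ 2 ≤ n) ∨ (u = 1 ∧ n = 1) by obtain ⟨c, hc⟩ := huodd; omega)
        with hgen | ⟨hu1, hnn⟩
      · have hjb : 6*j'*n ≤ 3*(u*m)*n := by
          have h1 : 6*j' ≤ 3*(u*m) := by omega
          exact mul_le_mul_of_nonneg_right h1 (by omega)
        have hP : m*R0 ≤ m*(3*n-1) := mul_le_mul_of_nonneg_left (by omega) hm0.le
        have hY : 0 ≤ 3*u*m*n^2 + 9*n^2 - u*m*n - 3*m*n := by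
          have s1 : 0 ≤ 3*u*n-u-3 := by
            rcases hgen with hu5 | hn2
            · nlinarith only [hu5, hn1,
                mul_nonneg (show (0:ℤ) ≤ u by omega) (show (0:ℤ) ≤ n-1 by omega)]
            · nlinarith only [hu, hn2,
                mul_nonneg (show (0:ℤ) ≤ u by omega) (show (0:ℤ) ≤ 3*n-5 by omega)]
          nlinarith only [mul_nonneg (mul_nonneg hm0.le (show (0:ℤ) ≤ n by omega)) s1, sq_nonneg n]
        nlinarith only [hY, hGn0, hub, hP, hjb]
      · -- u = 1, n = 1 wrap : R0 ≤ 2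
        subst hu1 hnn
        have hR02 : R0 ≤ 2 := by omega
        rcases le_or_gt 0 t with ht0 | ht0
        · -- t = 0 : forced lower branch
          have ht00 : t = 0 := by omega
          rw [ht00] at ht
          have hj'eq : j' = R0 + j := by omega
          have hlow : R0 ≤ m - 2*j := by omega
          rw [gz_low hlow]
          nlinarith only [hGn0, hm0, hj0, hR00, hR02, hj'eq, hlow, hj'um, hjm,
            mul_nonneg (show (0:ℤ) ≤ 2-R0 by omega) (show (0:ℤ) ≤ m-2*j-R0 by omega)]
        · -- t = -1
          have ht1 : t = -1 := by omega
          rw [ht1] at ht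
          have hmR0 : m*R0 ≤ 2*m := by
            nlinarith only [mul_le_mul_of_nonneg_left hR02 hm0.le]
          nlinarith only [hGn0, hub, hmR0, ht, hm0, hj0, hjm, hR00, hR0m, hj'0]

set_option maxHeartbeats 1000000 in
/-- For `m ≥ 1`, `u ≥ 1` odd, `0 ≤ j ≤ m/2`, `0 ≤ j' ≤ um/2`, the function
`N(n) = −ψ(m,j,(j'−j)/2 − n(um+3)/2) + u·n·(j' + 1 − n(um+3)/2)` attains its
minimum over `n ∈ ℤ` at `n = 0`. -/
theorem psi_N_min_at_zero (m u j j' : ℤ) (hm : 1 ≤ m) (hu : 1 ≤ u) (huodd : Odd u)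
    (hj0 : 0 ≤ j) (hjm : 2 * j ≤ m) (hj'0 : 0 ≤ j') (hj'um : 2 * j' ≤ u * m) :
    ∀ n : ℤ,
      -psi m j (((j' : ℚ) - (j : ℚ)) / 2) ≤
        -psi m j (((j' : ℚ) - (j : ℚ)) / 2 - (n : ℚ) * ((u : ℚ) * (m : ℚ) + 3) / 2) +
          (u : ℚ) * (n : ℚ) * ((j' : ℚ) + 1 - (n : ℚ) * ((u : ℚ) * (m : ℚ) + 3) / 2) := by
  intro n
  have hmQ : (0:ℚ) < (m:ℚ) := by exact_mod_cast (by omega : (0:ℤ) < m)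
  have e0 := psi_eval_s13 m j (j' - j) hm
  have e1 := psi_eval_s13 m j (j' - j - n*(u*m+3)) hm
  have hmaster := master m u j j' n hm hu huodd hj0 hjm hj'0 hj'um
  have hcast0 : ((j' : ℚ) - (j : ℚ)) / 2 = ((j' - j : ℤ) : ℚ)/2 := by push_cast; ring
  have hcast1 : ((j' : ℚ) - (j : ℚ)) / 2 - (n : ℚ) * ((u : ℚ) * (m : ℚ) + 3) / 2
      = ((j' - j - n*(u*m+3) : ℤ) : ℚ)/2 := by push_cast; ring
  have hdiv : (0:ℚ) ≤ ((3*(u*m+3)*n^2 + (2*u*m - 6*j')*n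
        + Gz m j ((j' - j - n*(u*m+3)) % m) - Gz m j ((j' - j) % m) : ℤ) : ℚ) / (2*(m:ℚ)) :=
    div_nonneg (by exact_mod_cast hmaster) (by linarith)
  have hiden : (-(-((((j' - j - n*(u*m+3) : ℤ) : ℚ))^2 + 2*(j:ℚ)*((j' - j - n*(u*m+3) : ℤ):ℚ)
          + ((Gz m j ((j' - j - n*(u*m+3)) % m) : ℤ):ℚ)) / (2*(m:ℚ)))
        + (u:ℚ)*(n:ℚ)*((j':ℚ) + 1 - (n:ℚ)*((u:ℚ)*(m:ℚ)+3)/2))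
      - (-(-((((j' - j : ℤ):ℚ))^2 + 2*(j:ℚ)*((j' - j:ℤ):ℚ)
          + ((Gz m j ((j' - j) % m):ℤ):ℚ)) / (2*(m:ℚ))))
      = ((3*(u*m+3)*n^2 + (2*u*m - 6*j')*n
        + Gz m j ((j' - j - n*(u*m+3)) % m) - Gz m j ((j' - j) % m) : ℤ) : ℚ) / (2*(m:ℚ)) := by
    have hne : (2*(m:ℚ)) ≠ 0 := by positivity
    field_simp
    push_cast
    ring
  rw [hcast1, hcast0, e1, e0, ← sub_nonneg, hiden]
  exact hdiv
end

section
/- Let m ≥ 1 be an integer, u ≥ 1 an odd integer, and j, j' integers with 0 ≤ j ≤ m/2 and 0 ≤ j' ≤ um/2. Then −ψ(m,j,−(j'+j)/2 − 1 + (um+3)/2) + u·(j' + 1 − (um+3)/2) = u/2 − ψ(m,j,−(j'+j)/2 + 1/2). -/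
/-- Closed form of the exponent `N(1)` for type `A₂⁽²⁾`: for `m ≥ 1`, `u ≥ 1` odd,
`0 ≤ j ≤ m/2`, `0 ≤ j' ≤ um/2`, one has
`−ψ(m,j,−(j'+j)/2 − 1 + (um+3)/2) + u(j' + 1 − (um+3)/2) = u/2 − ψ(m,j,−(j'+j)/2 + 1/2)`. -/
theorem psi_N_one_closed_form (m u j j' : ℤ) (hm : 1 ≤ m) (hu : 1 ≤ u) (huodd : Odd u)
    (hj0 : 0 ≤ j) (hjm : 2 * j ≤ m) (hj'0 : 0 ≤ j') (hj'um : 2 * j' ≤ u * m) :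
    -psi m j (-(((j' : ℚ) + (j : ℚ)) / 2) - 1 + ((u : ℚ) * (m : ℚ) + 3) / 2) +
        (u : ℚ) * ((j' : ℚ) + 1 - ((u : ℚ) * (m : ℚ) + 3) / 2) =
      (u : ℚ) / 2 - psi m j (-(((j' : ℚ) + (j : ℚ)) / 2) + 1 / 2) := by
  have hm0 : (m : ℚ) ≠ 0 := by
    have : (0 : ℚ) < (m : ℚ) := by exact_mod_cast lt_of_lt_of_le zero_lt_one hm
    exact ne_of_gt this
  set k0 : ℚ := -(((j' : ℚ) + (j : ℚ)) / 2) + 1 / 2 with hk0def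
  have hk1 : -(((j' : ℚ) + (j : ℚ)) / 2) - 1 + ((u : ℚ) * (m : ℚ) + 3) / 2
      = k0 + (m : ℚ) / 2 * (u : ℚ) := by rw [hk0def]; ring
  rw [hk1]
  simp only [psi]
  have hdiv : 2 * (k0 + (m : ℚ) / 2 * (u : ℚ)) / (m : ℚ) = 2 * k0 / (m : ℚ) + (u : ℚ) := by
    field_simp
  have hq : ⌊2 * (k0 + (m : ℚ) / 2 * (u : ℚ)) / (m : ℚ)⌋ = ⌊2 * k0 / (m : ℚ)⌋ + u := by
    rw [hdiv, Int.floor_add_intCast]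
  rw [hq]
  set q : ℤ := ⌊2 * k0 / (m : ℚ)⌋ with hqdef
  have hr : k0 + (m : ℚ) / 2 * (u : ℚ) - (m : ℚ) / 2 * ((q + u : ℤ) : ℚ)
      = k0 - (m : ℚ) / 2 * (q : ℚ) := by push_cast; ring
  rw [hr]
  set r : ℚ := k0 - (m : ℚ) / 2 * (q : ℚ) with hrdef
  have h2k0 : 2 * k0 = 1 - (j' : ℚ) - (j : ℚ) := by rw [hk0def]; ring
  push_cast
  linear_combination (-(u : ℚ)) * h2k0
end

section
/- Let m ≥ 1 be an integer, u ≥ 1 an odd integer, and j, j' integers with 0 ≤ j ≤ m/2 and 0 ≤ j' ≤ um/2. Then −ψ(m,j,(j'−j)/2) ≤ min( −ψ(m,j,−(j'+j)/2 − 1), u/2 − ψ(m,j,−(j'+j)/2 + 1/2) ). -/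
/-- The `c`-part of `ψ`, doubled and integerized. -/
def Cc (m j s : ℤ) : ℤ :=
  if s ≤ m - 2 * j then -s
  else if (s - m) % 2 = 0 then m - 2 * j - 2 * s
  else m - 1 - 2 * j - 2 * s

/-- `2·ψ(m,j,n/2)` as an integer-valued function. -/
def Phi (m j n : ℤ) : ℤ :=
  -(n / m) * (n + n % m + 2 * j) + Cc m j (n % m)

lemma Phi_formula (m j q s : ℤ) (hm : 0 < m) (h0 : 0 ≤ s) (h1 : s < m) :
    Phi m j (m * q + s) = -q * ((m * q + s) + s + 2 * j) + Cc m j s := by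
  have h := (Int.ediv_emod_unique (a := m * q + s) (b := m) (r := s) (q := q) hm).2
    ⟨by ring, h0, h1⟩
  unfold Phi
  rw [h.1, h.2]

lemma psi_eq_Phi (m j n : ℤ) (hm : 0 < m) :
    psi m j ((n : ℚ) / 2) = (Phi m j n : ℚ) / 2 := by
  obtain ⟨q, s, h0, h1, hn⟩ : ∃ q s, 0 ≤ s ∧ s < m ∧ n = m * q + s :=
    ⟨n / m, n % m, Int.emod_nonneg n (by omega), Int.emod_lt_of_pos n hm,
      (Int.mul_ediv_add_emod n m).symm⟩
  subst hn
  rw [Phi_formula m j q s hm h0 h1]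
  have hfloor : ⌊2 * (((m * q + s : ℤ) : ℚ) / 2) / (m : ℚ)⌋ = q := by
    have hm' : ((m : ℚ)) ≠ 0 := by exact_mod_cast (by omega : m ≠ 0)
    have hrw : 2 * (((m * q + s : ℤ) : ℚ) / 2) / (m : ℚ) = (q : ℚ) + (s : ℚ) / (m : ℚ) := by
      push_cast; field_simp
    rw [hrw, Int.floor_eq_iff]
    constructor
    · have : (0 : ℚ) ≤ (s : ℚ) / (m : ℚ) := by positivity
      push_cast; linarith
    · have hmp : (0 : ℚ) < (m : ℚ) := by exact_mod_cast hm
      have : (s : ℚ) / (m : ℚ) < 1 := by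
        rw [div_lt_one hmp]; exact_mod_cast h1
      push_cast; linarith
  have hr : ((m * q + s : ℤ) : ℚ) / 2 - (m : ℚ) / 2 * (q : ℚ) = (s : ℚ) / 2 := by
    push_cast; ring
  classical
  simp only [psi, hfloor, hr]
  have hc1 : ((s : ℚ) / 2 ≤ (m : ℚ) / 2 - (j : ℚ)) ↔ (s ≤ m - 2 * j) := by
    constructor
    · intro h
      have h' : (s : ℚ) ≤ ((m - 2 * j : ℤ) : ℚ) := by push_cast; linarith
      exact_mod_cast h'
    · intro h
      have h' : (s : ℚ) ≤ ((m - 2 * j : ℤ) : ℚ) := by exact_mod_cast h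
      push_cast at h'; linarith
  have hc2 : (∃ t : ℤ, (s : ℚ) / 2 - (m : ℚ) / 2 = (t : ℚ)) ↔ ((s - m) % 2 = 0) := by
    constructor
    · rintro ⟨t, ht⟩
      have h' : ((s - m : ℤ) : ℚ) = ((2 * t : ℤ) : ℚ) := by push_cast; linarith
      have : s - m = 2 * t := by exact_mod_cast h'
      omega
    · intro h
      refine ⟨(s - m) / 2, ?_⟩
      have h2 : s - m = 2 * ((s - m) / 2) := by omega
      have h' : ((s - m : ℤ) : ℚ) = ((2 * ((s - m) / 2) : ℤ) : ℚ) := by rw [← h2]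
      push_cast at h'; linarith
  unfold Cc
  by_cases hA : s ≤ m - 2 * j
  · rw [if_pos (hc1.mpr hA), if_pos hA]
    push_cast; ring
  · rw [if_neg (fun h => hA (hc1.mp h)), if_neg hA]
    by_cases hB : (s - m) % 2 = 0
    · rw [if_pos (hc2.mpr hB), if_pos hB]
      push_cast; ring
    · rw [if_neg (fun h => hB (hc2.mp h)), if_neg hB]
      push_cast; ring

lemma D1 (m j n : ℤ) (hm : 0 < m) (hj0 : 0 ≤ j) (hjm : 2 * j ≤ m) (hn : -j ≤ n) :
    Phi m j (-2 * j - 2 - n) ≤ Phi m j n := by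
  obtain ⟨q, s, h0, h1, hn1⟩ : ∃ q s, 0 ≤ s ∧ s < m ∧ n = m * q + s :=
    ⟨n / m, n % m, Int.emod_nonneg n (by omega), Int.emod_lt_of_pos n hm,
      (Int.mul_ediv_add_emod n m).symm⟩
  subst hn1
  obtain ⟨q', s', h0', h1', hn2⟩ : ∃ q' s', 0 ≤ s' ∧ s' < m ∧
      -2 * j - 2 - (m * q + s) = m * q' + s' :=
    ⟨_ / m, _ % m, Int.emod_nonneg _ (by omega), Int.emod_lt_of_pos _ hm,
      (Int.mul_ediv_add_emod _ m).symm⟩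
  rw [hn2, Phi_formula m j q s hm h0 h1, Phi_formula m j q' s' hm h0' h1']
  obtain ⟨e, hedef⟩ : ∃ e : ℤ, q' = -q - e := ⟨-q - q', by ring⟩
  subst hedef
  have he : e * m = s + s' + 2 * j + 2 := by linear_combination hn2
  -- bounds on e
  have he1 : 1 ≤ e := by
    rcases le_or_gt 1 e with h | h
    · exact h
    · exfalso
      have h2 : e * m ≤ 0 * m := mul_le_mul_of_nonneg_right (by omega) hm.le
      have h3 : (0 : ℤ) * m = 0 := by ring
      linarith
  have he3 : e ≤ 3 := by
    have h3 : e * m ≤ 3 * m := by linarith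
    exact le_of_mul_le_mul_right h3 hm
  -- q bound: -2 < q
  have hqm1 : -2 < q := by
    have h4 : m * (-2) < m * q := by nlinarith
    exact lt_of_mul_lt_mul_left h4 hm.le
  -- the key quadratic identity
  have key : -q * ((m * q + s) + s + 2 * j) - (-(-q - e) * ((m * (-q - e) + s') + s' + 2 * j))
      = 4 * q + e * e * m - 2 * e * s' - 2 * e * j := by
    linear_combination 2 * q * he
  -- the linear bound on the c-parts
  have hC : Cc m j s' - Cc m j s ≤ 4 * q + e * e * m - 2 * e * s' - 2 * e * j := by
    have hecase : e = 1 ∨ e = 2 ∨ e = 3 := by omega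
    unfold Cc
    rcases hecase with h | h | h
    · subst h
      have h6 : m * (-1) < m * q := by nlinarith
      have hq0 : -1 < q := lt_of_mul_lt_mul_left h6 hm.le
      split_ifs <;> omega
    · subst h; split_ifs <;> omega
    · subst h; split_ifs <;> omega
  linarith [key, hC]

lemma D2 (m j n u : ℤ) (hm : 0 < m) (hj0 : 0 ≤ j) (hjm : 2 * j ≤ m)
    (huodd : u % 2 = 1) (hcon : 2 * (n + j) ≤ u * m) :
    Phi m j (-2 * j + 1 - n) ≤ u + Phi m j n := by
  obtain ⟨q, s, h0, h1, hn1⟩ : ∃ q s, 0 ≤ s ∧ s < m ∧ n = m * q + s :=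
    ⟨n / m, n % m, Int.emod_nonneg n (by omega), Int.emod_lt_of_pos n hm,
      (Int.mul_ediv_add_emod n m).symm⟩
  subst hn1
  obtain ⟨q', s', h0', h1', hn2⟩ : ∃ q' s', 0 ≤ s' ∧ s' < m ∧
      -2 * j + 1 - (m * q + s) = m * q' + s' :=
    ⟨_ / m, _ % m, Int.emod_nonneg _ (by omega), Int.emod_lt_of_pos _ hm,
      (Int.mul_ediv_add_emod _ m).symm⟩
  rw [hn2, Phi_formula m j q s hm h0 h1, Phi_formula m j q' s' hm h0' h1']
  obtain ⟨e, hedef⟩ : ∃ e : ℤ, q' = -q - e := ⟨-q - q', by ring⟩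
  subst hedef
  have he : e * m = s + s' + 2 * j - 1 := by linear_combination hn2
  have hem1 : -1 ≤ e := by
    rcases le_or_gt (-1) e with h | h
    · exact h
    · exfalso
      have h2 : e * m ≤ (-2) * m := mul_le_mul_of_nonneg_right (by omega) hm.le
      have h3 : (-2 : ℤ) * m ≤ -2 := by linarith
      linarith
  have he2 : e ≤ 2 := by
    have h3 : e * m < 3 * m := by linarith
    have := lt_of_mul_lt_mul_right h3 hm.le
    omega
  -- u bounds
  have hu1 : 2 * q ≤ u := by
    have h4 : (2 * q) * m ≤ u * m := by nlinarith
    exact le_of_mul_le_mul_right h4 hm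
  have hu2 : 2 * s + 2 * j ≤ m ∨ 2 * q + 2 ≤ u := by
    rcases le_or_gt (2 * s + 2 * j) m with h | h
    · exact Or.inl h
    · right
      have h4 : (2 * q + 1) * m < u * m := by nlinarith
      have := lt_of_mul_lt_mul_right h4 hm.le
      omega
  have key : -q * ((m * q + s) + s + 2 * j) - (-(-q - e) * ((m * (-q - e) + s') + s' + 2 * j))
      = -2 * q + e * e * m - 2 * e * s' - 2 * e * j := by
    linear_combination 2 * q * he
  have hC : Cc m j s' - Cc m j s ≤ u + (-2 * q + e * e * m - 2 * e * s' - 2 * e * j) := by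
    have hecase : e = -1 ∨ e = 0 ∨ e = 1 ∨ e = 2 := by omega
    unfold Cc
    rcases hecase with h | h | h | h <;> subst h <;> split_ifs <;> omega
  linarith [key, hC]

/-- For `m ≥ 1`, `u ≥ 1` odd, `0 ≤ j ≤ m/2`, `0 ≤ j' ≤ um/2`:
`−ψ(m,j,(j'−j)/2) ≤ min(−ψ(m,j,−(j'+j)/2 − 1), u/2 − ψ(m,j,−(j'+j)/2 + 1/2))`. -/
theorem psi_min_inequality (m u j j' : ℤ) (hm : 1 ≤ m) (hu : 1 ≤ u) (huodd : Odd u)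
    (hj0 : 0 ≤ j) (hjm : 2 * j ≤ m) (hj'0 : 0 ≤ j') (hj'um : 2 * j' ≤ u * m) :
    -psi m j (((j' : ℚ) - (j : ℚ)) / 2) ≤
      min (-psi m j (-(((j' : ℚ) + (j : ℚ)) / 2) - 1))
          ((u : ℚ) / 2 - psi m j (-(((j' : ℚ) + (j : ℚ)) / 2) + 1 / 2)) := by
  have hm0 : (0 : ℤ) < m := by omega
  have e1 : ((j' : ℚ) - (j : ℚ)) / 2 = ((j' - j : ℤ) : ℚ) / 2 := by push_cast; ring
  have e2 : -(((j' : ℚ) + (j : ℚ)) / 2) - 1 = ((-2 * j - 2 - (j' - j) : ℤ) : ℚ) / 2 := by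
    push_cast; ring
  have e3 : -(((j' : ℚ) + (j : ℚ)) / 2) + 1 / 2 = ((-2 * j + 1 - (j' - j) : ℤ) : ℚ) / 2 := by
    push_cast; ring
  rw [e1, e2, e3, psi_eq_Phi m j _ hm0, psi_eq_Phi m j _ hm0, psi_eq_Phi m j _ hm0]
  have I1 : Phi m j (-2 * j - 2 - (j' - j)) ≤ Phi m j (j' - j) :=
    D1 m j (j' - j) hm0 hj0 hjm (by omega)
  have I2 : Phi m j (-2 * j + 1 - (j' - j)) ≤ u + Phi m j (j' - j) :=
    D2 m j (j' - j) u hm0 hj0 hjm (Int.odd_iff.mp huodd) (by omega)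
  rw [le_min_iff]
  constructor
  · have h1 : ((Phi m j (-2 * j - 2 - (j' - j)) : ℤ) : ℚ) ≤ ((Phi m j (j' - j) : ℤ) : ℚ) := by
      exact_mod_cast I1
    linarith
  · have h2 : ((Phi m j (-2 * j + 1 - (j' - j)) : ℤ) : ℚ) ≤ ((u + Phi m j (j' - j) : ℤ) : ℚ) := by
      exact_mod_cast I2
    push_cast at h2
    linarith
end
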